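/- arXiv:2506.20218 — 2 statements merged into one kernel-verified Lean document; each statement's English description precedes it below -/
import Mathlib

section
/- There exist constants C > 0 and c > 0 and a natural number n0 such that for all integers n ≥ n0 with k ≤ n: if (X_1,…,X_k) is multinomial with parameters h and p where p_1 ≥ p_2 ≥ … ≥ p_k, and h·p_1 ≥ C·log n, then Pr( ∩_{i=2}^k {X_1 > X_i} ) ≥ c·p_1. -/
open scoped BigOperators

noncomputable section

/-- The number of the `h` i.i.d. samples `ω` that are equal to opinion `i`. -/
def cnt {k h : ℕ} (ω : Fin h → Fin k) (i : Fin k) : ℕ :=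
  (Finset.univ.filter fun j => ω j = i).card

/-- The probability of the event `A` under `h` i.i.d. samples drawn from the
probability vector `p` on `Fin k` (multinomial sampling). -/
def multiPr (k h : ℕ) (p : Fin k → ℝ) (A : Set (Fin h → Fin k)) : ℝ :=
  ∑ ω : Fin h → Fin k, A.indicator (fun ω => ∏ j, p (ω j)) ω

/-- The maximal number of samples received by an opinion. -/
def maxCnt {k h : ℕ} (ω : Fin h → Fin k) : ℕ :=
  Finset.univ.sup (cnt ω)

/-- The number of opinions achieving the maximal number of samples. -/
def numMax {k h : ℕ} (ω : Fin h → Fin k) : ℕ :=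
  (Finset.univ.filter fun i => cnt ω i = maxCnt ω).card

/-- The probability that opinion `i` wins the `h`-majority with uniform
tie-breaking, jointly with the event `A`:
`E[ 1_A · 1{X_i = max_l X_l} / #{l : X_l maximal} ]`. -/
def winPrOn (k h : ℕ) (p : Fin k → ℝ) (A : Set (Fin h → Fin k)) (i : Fin k) : ℝ :=
  ∑ ω : Fin h → Fin k,
    (A ∩ {ω' | cnt ω' i = maxCnt ω'}).indicator
      (fun ω => (∏ j, p (ω j)) / (numMax ω : ℝ)) ω

/-- The probability that opinion `i` wins the `h`-majority with uniform tie-breaking. -/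
def winPr (k h : ℕ) (p : Fin k → ℝ) (i : Fin k) : ℝ :=
  winPrOn k h p Set.univ i

/-- `W_{i,strict}`: opinion `i` is the unique most sampled opinion. -/
def Wstrict (k h : ℕ) (i : Fin k) : Set (Fin h → Fin k) :=
  {ω | ∀ j, j ≠ i → cnt ω j < cnt ω i}

/-- `W_{i,ties}`: opinion `i` is among the most sampled opinions. -/
def Wties (k h : ℕ) (i : Fin k) : Set (Fin h → Fin k) :=
  {ω | ∀ j, j ≠ i → cnt ω j ≤ cnt ω i}

/-- `W_{1,2,strict}`: opinion `i₁` or opinion `i₂` is the unique most sampled opinion. -/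
def W12strict (k h : ℕ) (i₁ i₂ : Fin k) : Set (Fin h → Fin k) :=
  Wstrict k h i₁ ∪ Wstrict k h i₂

/-- Opinion 1 (as an element of `Fin k`, assuming `2 ≤ k`). -/
def o₁ (k : ℕ) (hk : 2 ≤ k) : Fin k := ⟨0, by omega⟩

/-- Opinion 2 (as an element of `Fin k`, assuming `2 ≤ k`). -/
def o₂ (k : ℕ) (hk : 2 ≤ k) : Fin k := ⟨1, by omega⟩

namespace SMPLB

open Finset
open scoped Classical

variable {k h : ℕ}

def w (p : Fin k → ℝ) (ω : Fin h → Fin k) : ℝ := ∏ j, p (ω j)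

lemma w_nonneg {p : Fin k → ℝ} (hp : ∀ i, 0 ≤ p i) (ω : Fin h → Fin k) : 0 ≤ w p ω :=
  Finset.prod_nonneg fun _ _ => hp _

lemma sum_prod (k : ℕ) (f : Fin k → ℝ) :
    ∀ h : ℕ, (∑ ω : Fin h → Fin k, ∏ j, f (ω j)) = (∑ v, f v) ^ h
  | 0 => by simp
  | (m+1) => by
    rw [← Equiv.sum_comp (Fin.consEquiv (fun _ : Fin (m+1) => Fin k))
      (fun ω : Fin (m+1) → Fin k => ∏ j, f (ω j))]
    have hterm : ∀ q : Fin k × (Fin m → Fin k),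
        (∏ j, f (((Fin.consEquiv (fun _ : Fin (m+1) => Fin k)) q) j)) = f q.1 * ∏ j, f (q.2 j) := by
      rintro ⟨a, g⟩
      rw [Fin.prod_univ_succ]
      simp [Fin.consEquiv]
    rw [Fintype.sum_congr _ _ hterm, Fintype.sum_prod_type]
    simp_rw [← Finset.mul_sum, ← Finset.sum_mul]
    rw [sum_prod k f m, pow_succ]
    ring

lemma zpow_cnt (z : ℝ) (i : Fin k) (ω : Fin h → Fin k) :
    z ^ cnt ω i = ∏ j, (if ω j = i then z else 1) := by
  rw [← Finset.prod_filter_mul_prod_filter_not Finset.univ (fun j => ω j = i)]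
  have h1 : (∏ x ∈ Finset.univ.filter (fun x => ω x = i), (if ω x = i then z else 1))
      = ∏ _x ∈ Finset.univ.filter (fun x => ω x = i), z :=
    Finset.prod_congr rfl (fun x hx => if_pos (Finset.mem_filter.1 hx).2)
  have h2 : (∏ x ∈ Finset.univ.filter (fun x => ¬ ω x = i), (if ω x = i then z else 1))
      = ∏ _x ∈ Finset.univ.filter (fun x => ¬ ω x = i), (1:ℝ) :=
    Finset.prod_congr rfl (fun x hx => if_neg (Finset.mem_filter.1 hx).2)
  rw [h1, h2, Finset.prod_const, Finset.prod_const, one_pow, mul_one, cnt]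

lemma mgf (p : Fin k → ℝ) (hsum : ∑ v, p v = 1) (i : Fin k) (z : ℝ) :
    (∑ ω : Fin h → Fin k, w p ω * z ^ cnt ω i) = (1 + p i * (z - 1)) ^ h := by
  have hterm : ∀ ω : Fin h → Fin k,
      w p ω * z ^ cnt ω i = ∏ j, (p (ω j) * (if ω j = i then z else 1)) := by
    intro ω
    rw [Finset.prod_mul_distrib, w, zpow_cnt]
  rw [Fintype.sum_congr _ _ hterm]
  have key := sum_prod k (fun v => p v * if v = i then z else 1) h
  beta_reduce at key
  rw [key]
  congr 1
  have hv : ∀ v : Fin k, p v * (if v = i then z else 1)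
      = p v + (if v = i then p v * (z-1) else 0) := by
    intro v; split <;> ring
  rw [Fintype.sum_congr _ _ hv, Finset.sum_add_distrib, hsum]
  simp [Finset.sum_ite_eq']


lemma tail_core (p : Fin k → ℝ) (hp0 : ∀ i, 0 ≤ p i) (hsum : ∑ v, p v = 1)
    (i : Fin k) (z : ℝ) (hz0 : 0 < z) (b : ℕ) (P : (Fin h → Fin k) → Prop)
    [DecidablePred P] (hP : ∀ ω, P ω → z ^ b ≤ z ^ cnt ω i) :
    ∑ ω ∈ Finset.univ.filter P, w p ω ≤ (1 + p i * (z - 1)) ^ h / z ^ b := by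
  have hzb : (0:ℝ) < z ^ b := pow_pos hz0 b
  rw [← mgf p hsum i z, le_div_iff₀ hzb]
  calc (∑ ω ∈ Finset.univ.filter P, w p ω) * z ^ b
      = ∑ ω ∈ Finset.univ.filter P, w p ω * z ^ b := by rw [Finset.sum_mul]
    _ ≤ ∑ ω ∈ Finset.univ.filter P, w p ω * z ^ cnt ω i := by
        refine Finset.sum_le_sum fun ω hω => ?_
        exact mul_le_mul_of_nonneg_left (hP ω (Finset.mem_filter.1 hω).2) (w_nonneg hp0 ω)
    _ ≤ ∑ ω : Fin h → Fin k, w p ω * z ^ cnt ω i := by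
        refine Finset.sum_le_sum_of_subset_of_nonneg (Finset.filter_subset _ _) ?_
        intro ω _ _
        exact mul_nonneg (w_nonneg hp0 ω) (le_of_lt (pow_pos hz0 _))

lemma tail_ge (p : Fin k → ℝ) (hp0 : ∀ i, 0 ≤ p i) (hsum : ∑ v, p v = 1)
    (i : Fin k) (z : ℝ) (hz : 1 ≤ z) (b : ℕ) :
    ∑ ω ∈ Finset.univ.filter (fun ω : Fin h → Fin k => b ≤ cnt ω i), w p ω
      ≤ (1 + p i * (z - 1)) ^ h / z ^ b :=
  tail_core p hp0 hsum i z (lt_of_lt_of_le one_pos hz) b _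
    (fun ω hω => pow_le_pow_right₀ hz hω)

lemma tail_le (p : Fin k → ℝ) (hp0 : ∀ i, 0 ≤ p i) (hsum : ∑ v, p v = 1)
    (i : Fin k) (z : ℝ) (hz0 : 0 < z) (hz1 : z ≤ 1) (b : ℕ) :
    ∑ ω ∈ Finset.univ.filter (fun ω : Fin h → Fin k => cnt ω i ≤ b), w p ω
      ≤ (1 + p i * (z - 1)) ^ h / z ^ b :=
  tail_core p hp0 hsum i z hz0 b _
    (fun ω hω => pow_le_pow_of_le_one (le_of_lt hz0) hz1 hω)


lemma cnt_sum (ω : Fin h → Fin k) : ∑ i, cnt ω i = h := by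
  have := Finset.card_eq_sum_card_fiberwise
    (f := ω) (s := Finset.univ) (t := Finset.univ) (fun x _ => Finset.mem_univ _)
  simpa [cnt] using this.symm

/-- modify `ω` by setting all positions of `s` to value `v` -/
def modify (ω : Fin h → Fin k) (v : Fin k) (s : Finset (Fin h)) : Fin h → Fin k :=
  fun x => if x ∈ s then v else ω x

lemma cnt_modify_v (ω : Fin h → Fin k) {u v : Fin k} (huv : u ≠ v) {s : Finset (Fin h)}
    (hs : ∀ x ∈ s, ω x = u) : cnt (modify ω v s) v = cnt ω v + s.card := by
  have hset : (Finset.univ.filter fun x => modify ω v s x = v)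
      = s ∪ (Finset.univ.filter fun x => ω x = v) := by
    ext x
    by_cases hx : x ∈ s <;> simp [modify, hx]
  have hdisj : Disjoint s (Finset.univ.filter fun x => ω x = v) := by
    rw [Finset.disjoint_left]
    intro x hx hx'
    exact huv ((hs x hx).symm.trans (Finset.mem_filter.1 hx').2)
  rw [cnt, hset, Finset.card_union_of_disjoint hdisj, cnt]
  ring

lemma cnt_modify_u (ω : Fin h → Fin k) {u v : Fin k} (huv : u ≠ v) {s : Finset (Fin h)}
    (hs : ∀ x ∈ s, ω x = u) : cnt (modify ω v s) u = cnt ω u - s.card := by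
  have hset : (Finset.univ.filter fun x => modify ω v s x = u)
      = (Finset.univ.filter fun x => ω x = u) \ s := by
    ext x
    by_cases hx : x ∈ s <;> simp only [Finset.mem_filter, Finset.mem_sdiff, Finset.mem_univ, true_and] <;> simp [modify, hx, huv.symm]
  rw [cnt, hset, Finset.card_sdiff_of_subset, cnt]
  intro x hx
  simp [hs x hx]

lemma cnt_modify_other (ω : Fin h → Fin k) {u v i : Fin k} {s : Finset (Fin h)}
    (hs : ∀ x ∈ s, ω x = u) (hiu : i ≠ u) (hiv : i ≠ v) :
    cnt (modify ω v s) i = cnt ω i := by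
  have hset : (Finset.univ.filter fun x => modify ω v s x = i)
      = (Finset.univ.filter fun x => ω x = i) := by
    ext x
    by_cases hx : x ∈ s
    · simp only [Finset.mem_filter, Finset.mem_univ, true_and]
      simp only [modify, hx, if_true]
      rw [hs x hx]
      constructor
      · intro hh; exact absurd hh.symm hiv
      · intro hh; exact absurd hh.symm hiu
    · simp only [Finset.mem_filter, Finset.mem_univ, true_and]
      simp [modify, hx]
  rw [cnt, hset, cnt]

lemma w_modify (p : Fin k → ℝ) (ω : Fin h → Fin k) (v : Fin k) (s : Finset (Fin h)) :
    w p (modify ω v s) = p v ^ s.card * ∏ x ∈ sᶜ, p (ω x) := by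
  rw [w, ← Finset.prod_mul_prod_compl s]
  congr 1
  · rw [← Finset.prod_const]
    exact Finset.prod_congr rfl fun x hx => by simp [modify, hx]
  · exact Finset.prod_congr rfl fun x hx => by
      simp [modify, Finset.mem_compl.1 hx]

lemma w_split (p : Fin k → ℝ) (ω : Fin h → Fin k) {u : Fin k} {s : Finset (Fin h)}
    (hs : ∀ x ∈ s, ω x = u) :
    w p ω = p u ^ s.card * ∏ x ∈ sᶜ, p (ω x) := by
  rw [w, ← Finset.prod_mul_prod_compl s]
  congr 1
  rw [← Finset.prod_const]
  exact Finset.prod_congr rfl fun x hx => by rw [hs x hx]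

lemma choose_ratio (n d : ℕ) (hd : d ≤ n) :
    (n + 1 - d) * Nat.choose (n+1) d = (n+1) * Nat.choose n d := by
  have h1 := Nat.choose_mul_factorial_mul_factorial (Nat.le_succ_of_le hd)
  have h2 := Nat.choose_mul_factorial_mul_factorial hd
  have hpos : 0 < d.factorial * (n - d).factorial :=
    Nat.mul_pos (Nat.factorial_pos d) (Nat.factorial_pos (n-d))
  apply Nat.eq_of_mul_eq_mul_right hpos
  have hfact : (n + 1 - d).factorial = (n + 1 - d) * (n - d).factorial := by
    rw [Nat.succ_sub hd, Nat.factorial_succ]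
  calc (n + 1 - d) * Nat.choose (n+1) d * (d.factorial * (n - d).factorial)
      = Nat.choose (n+1) d * d.factorial * ((n + 1 - d) * (n - d).factorial) := by ring
    _ = Nat.choose (n+1) d * d.factorial * (n + 1 - d).factorial := by rw [hfact]
    _ = (n+1).factorial := h1
    _ = (n+1) * n.factorial := Nat.factorial_succ n
    _ = (n+1) * (Nat.choose n d * d.factorial * (n - d).factorial) := by rw [h2]
    _ = (n+1) * Nat.choose n d * (d.factorial * (n - d).factorial) := by ring



variable {k h : ℕ} (hk : 2 ≤ k)

/-- the competitor set: all opinions other than opinion 1 -/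
def TT (k : ℕ) (hk : 2 ≤ k) : Finset (Fin k) := Finset.univ.filter (fun j => j ≠ o₁ k hk)

lemma TT_nonempty : (TT k hk).Nonempty := by
  refine ⟨o₂ k hk, ?_⟩
  simp only [TT, Finset.mem_filter, Finset.mem_univ, true_and]
  intro hh
  have := congrArg Fin.val hh
  simp [o₁, o₂] at this

/-- an opinion `≠ o₁` with maximal count -/
def jstar (hk : 2 ≤ k) (ω : Fin h → Fin k) : Fin k :=
  (Finset.exists_max_image (TT k hk) (cnt ω) (TT_nonempty hk)).choose

lemma jstar_spec (ω : Fin h → Fin k) :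
    jstar hk ω ∈ TT k hk ∧ ∀ i ∈ TT k hk, cnt ω i ≤ cnt ω (jstar hk ω) :=
  (Finset.exists_max_image (TT k hk) (cnt ω) (TT_nonempty hk)).choose_spec

lemma jstar_ne (ω : Fin h → Fin k) : jstar hk ω ≠ o₁ k hk := by
  have h1 := (jstar_spec hk ω).1
  simp only [TT, Finset.mem_filter] at h1
  exact h1.2

lemma jstar_max (ω : Fin h → Fin k) (i : Fin k) (hi : i ≠ o₁ k hk) :
    cnt ω i ≤ cnt ω (jstar hk ω) :=
  (jstar_spec hk ω).2 i (by simp [TT, hi])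

/-- maximal count among competitors -/
def MM (hk : 2 ≤ k) (ω : Fin h → Fin k) : ℕ := cnt ω (jstar hk ω)

/-- deficit of opinion 1 (plus one) -/
def dd (hk : 2 ≤ k) (ω : Fin h → Fin k) : ℕ := MM hk ω + 1 - cnt ω (o₁ k hk)

def BevP (hk : 2 ≤ k) (ω : Fin h → Fin k) : Prop :=
  ∀ i, i ≠ o₁ k hk → cnt ω i < cnt ω (o₁ k hk)

lemma cnt_le_MM {ω : Fin h → Fin k} (hb : ¬ BevP hk ω) :
    cnt ω (o₁ k hk) ≤ MM hk ω := by
  rw [BevP] at hb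
  push_neg at hb
  obtain ⟨i, hi, hle⟩ := hb
  exact le_trans hle (jstar_max hk ω i hi)



lemma fiber_facts (p : Fin k → ℝ) (hp0 : ∀ i, 0 ≤ p i)
    (hpmax : ∀ i, p i ≤ p (o₁ k hk)) {A B : ℕ} (hA : 2 ≤ A)
    {ω ω' : Fin h → Fin k} {s : Finset (Fin h)}
    (hGA : A ≤ cnt ω (o₁ k hk)) (hGB : ∀ i, cnt ω i ≤ B) (hGb : ¬ BevP hk ω)
    (hsub : s ⊆ Finset.univ.filter fun x => ω x = jstar hk ω) (hcard : s.card = dd hk ω)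
    (hF : modify ω (o₁ k hk) s = ω') :
    cnt ω' (o₁ k hk) = MM hk ω + 1 ∧
    cnt ω' (jstar hk ω) + 1 = cnt ω (o₁ k hk) ∧
    BevP hk ω' ∧
    ω = modify ω' (jstar hk ω) s ∧
    w p ω ≤ w p ω' := by
  have hso : ∀ x ∈ s, ω x = jstar hk ω := fun x hx => (Finset.mem_filter.1 (hsub hx)).2
  have hne : jstar hk ω ≠ o₁ k hk := jstar_ne hk ω
  have hMle : cnt ω (o₁ k hk) ≤ MM hk ω := cnt_le_MM hk hGb
  have h1le : 1 ≤ cnt ω (o₁ k hk) := le_trans (by omega) hGA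
  have hddx : dd hk ω = MM hk ω + 1 - cnt ω (o₁ k hk) := rfl
  have hMM : MM hk ω = cnt ω (jstar hk ω) := rfl
  have hco : cnt ω' (o₁ k hk) = MM hk ω + 1 := by
    rw [← hF, cnt_modify_v ω hne hso, hcard]
    omega
  have hcj : cnt ω' (jstar hk ω) + 1 = cnt ω (o₁ k hk) := by
    rw [← hF, cnt_modify_u ω hne hso, hcard, ← hMM]
    omega
  have hcother : ∀ i, i ≠ o₁ k hk → i ≠ jstar hk ω → cnt ω' i = cnt ω i := by
    intro i hio hij
    rw [← hF, cnt_modify_other ω hso hij hio]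
  refine ⟨hco, hcj, ?_, ?_, ?_⟩
  · intro i hi
    by_cases hij : i = jstar hk ω
    · rw [hij]
      omega
    · rw [hcother i hi hij, hco]
      have := jstar_max hk ω i hi
      omega
  · funext x
    by_cases hx : x ∈ s
    · simp [modify, hx, hso x hx]
    · simp only [modify, hx, if_false, ← hF]
  · rw [w_split p ω hso, ← hF, w_modify]
    refine mul_le_mul_of_nonneg_right ?_ ?_
    · exact pow_le_pow_left₀ (hp0 _) (hpmax _) _
    · exact Finset.prod_nonneg fun x _ => hp0 _



lemma transport (p : Fin k → ℝ) (hp0 : ∀ i, 0 ≤ p i)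
    (hpmax : ∀ i, p i ≤ p (o₁ k hk)) (A B : ℕ) (hA : 2 ≤ A) (hAB : A ≤ B + 1) :
    ∑ ω ∈ Finset.univ.filter
        (fun ω : Fin h → Fin k =>
          (A ≤ cnt ω (o₁ k hk) ∧ ∀ i, cnt ω i ≤ B) ∧ ¬ BevP hk ω), w p ω
      ≤ ((B+1 : ℝ)/(A : ℝ)) * ((h:ℝ)/((A:ℝ)-1))
          * ∑ ω ∈ Finset.univ.filter (fun ω : Fin h → Fin k => BevP hk ω), w p ω := by
  classical
  set o := o₁ k hk with ho
  set G := Finset.univ.filter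
      (fun ω : Fin h → Fin k =>
        (A ≤ cnt ω o ∧ ∀ i, cnt ω i ≤ B) ∧ ¬ BevP hk ω) with hGdef
  set P := G.sigma
      (fun ω => (Finset.univ.filter fun x => ω x = jstar hk ω).powersetCard (dd hk ω))
    with hPdef
  set g : (_ : Fin h → Fin k) × Finset (Fin h) → ℝ :=
      fun q => w p q.1 / (Nat.choose (MM hk q.1) (dd hk q.1) : ℝ) with hgdef
  have hA1R : (0:ℝ) < (A:ℝ) - 1 := by
    have : (2:ℝ) ≤ (A:ℝ) := by exact_mod_cast hA
    linarith
  have hA0R : (0:ℝ) < (A:ℝ) := by linarith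
  have hcoeff0 : (0:ℝ) ≤ ((B+1 : ℝ)/(A : ℝ)) * ((h:ℝ)/((A:ℝ)-1)) := by
    apply mul_nonneg <;> apply div_nonneg <;> positivity
  -- Step A
  have stepA : ∑ ω ∈ G, w p ω = ∑ q ∈ P, g q := by
    rw [hPdef, Finset.sum_sigma]
    refine Finset.sum_congr rfl ?_
    intro ω hω
    have hmem := (Finset.mem_filter.1 hω).2
    have h1le : 1 ≤ cnt ω o := le_trans (by omega) hmem.1.1
    have hd : dd hk ω ≤ MM hk ω := by
      have : dd hk ω = MM hk ω + 1 - cnt ω o := rfl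
      omega
    have hC0 : (0:ℝ) < (Nat.choose (MM hk ω) (dd hk ω) : ℝ) := by
      exact_mod_cast Nat.choose_pos hd
    have hconst : ∀ s ∈ (Finset.univ.filter fun x => ω x = jstar hk ω).powersetCard (dd hk ω),
        g ⟨ω, s⟩ = w p ω / (Nat.choose (MM hk ω) (dd hk ω) : ℝ) := fun _ _ => rfl
    rw [Finset.sum_congr rfl hconst, Finset.sum_const, Finset.card_powersetCard]
    have hcard : (Finset.univ.filter fun x => ω x = jstar hk ω).card
        = MM hk ω := rfl
    rw [hcard, nsmul_eq_mul, mul_comm, div_mul_cancel₀]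
    exact ne_of_gt hC0
  -- Step B
  have stepB : ∑ q ∈ P, g q
      = ∑ ω' : Fin h → Fin k, ∑ q ∈ P.filter (fun q => modify q.1 o q.2 = ω'), g q :=
    (Finset.sum_fiberwise_of_maps_to (fun q _ => Finset.mem_univ _) g).symm
  -- Step C
  have stepC : ∀ ω' : Fin h → Fin k,
      ∑ q ∈ P.filter (fun q => modify q.1 o q.2 = ω'), g q
      ≤ ((B+1 : ℝ)/(A : ℝ)) * ((h:ℝ)/((A:ℝ)-1)) * (if BevP hk ω' then w p ω' else 0) := by
    intro ω'
    by_cases hne : (P.filter (fun q => modify q.1 o q.2 = ω')).Nonempty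
    swap
    · rw [Finset.not_nonempty_iff_eq_empty] at hne
      rw [hne, Finset.sum_empty]
      apply mul_nonneg hcoeff0
      split
      · exact w_nonneg hp0 ω'
      · exact le_refl 0
    -- facts valid for every member of the fiber
    have hfacts : ∀ q ∈ P.filter (fun q => modify q.1 o q.2 = ω'),
        cnt ω' o = MM hk q.1 + 1 ∧
        cnt ω' (jstar hk q.1) + 1 = cnt q.1 o ∧
        BevP hk ω' ∧
        q.1 = modify ω' (jstar hk q.1) q.2 ∧
        w p q.1 ≤ w p ω' ∧
        (A ≤ cnt q.1 o ∧ ∀ i, cnt q.1 i ≤ B) ∧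
        q.2.card = dd hk q.1 ∧
        (∀ x ∈ q.2, ω' x = o) := by
      rintro ⟨ω, s⟩ hq
      obtain ⟨hqP, hqF⟩ := Finset.mem_filter.1 hq
      obtain ⟨hωG, hsmem⟩ := Finset.mem_sigma.1 hqP
      have hmem := (Finset.mem_filter.1 hωG).2
      obtain ⟨hsub, hcard⟩ := Finset.mem_powersetCard.1 hsmem
      obtain ⟨f1, f2, f3, f4, f5⟩ :=
        fiber_facts hk p hp0 hpmax hA hmem.1.1 hmem.1.2 hmem.2 hsub hcard hqF
      refine ⟨f1, f2, f3, f4, f5, hmem.1, hcard, ?_⟩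
      intro x hx
      rw [← hqF]
      simp [modify, hx]
    obtain ⟨q₀, hq₀⟩ := hne
    obtain ⟨w1, w2, w3, w4, w5, w6, w7, w8⟩ := hfacts q₀ hq₀
    have hn'def : cnt ω' o = (cnt ω' o - 1) + 1 := by omega
    set n' : ℕ := cnt ω' o - 1 with hn'
    have hn'B : n' ≤ B := by
      have hMMd : MM hk q₀.1 = cnt q₀.1 (jstar hk q₀.1) := rfl
      have hB := w6.2 (jstar hk q₀.1)
      omega
    set filterJ := Finset.univ.filter
        (fun j : Fin k => j ≠ o ∧ A - 1 ≤ cnt ω' j) with hfJ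
    set Tgt := filterJ.sigma
        (fun j => (Finset.univ.filter fun x => ω' x = o).powersetCard
          (cnt ω' o - cnt ω' j - 1)) with hTgtdef
    set bnd : (_ : Fin k) × Finset (Fin h) → ℝ :=
        fun r => w p ω' / (Nat.choose n' (cnt ω' o - cnt ω' r.1 - 1) : ℝ) with hbnd
    set e : (_ : Fin h → Fin k) × Finset (Fin h) → (_ : Fin k) × Finset (Fin h) :=
        fun q => ⟨jstar hk q.1, q.2⟩ with he
    have hbnd0 : ∀ r, 0 ≤ bnd r := by
      intro r
      exact div_nonneg (w_nonneg hp0 ω') (Nat.cast_nonneg _)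
    -- pointwise domination
    have hpt : ∀ q ∈ P.filter (fun q => modify q.1 o q.2 = ω'), g q ≤ bnd (e q) := by
      intro q hq
      obtain ⟨f1, f2, f3, f4, f5, f6, f7, f8⟩ := hfacts q hq
      have hMMq : MM hk q.1 = n' := by omega
      have hdd : dd hk q.1 = MM hk q.1 + 1 - cnt q.1 o := rfl
      have h1le : 1 ≤ cnt q.1 o := le_trans (by omega) f6.1
      have hddq : dd hk q.1 = cnt ω' o - cnt ω' (jstar hk q.1) - 1 := by omega
      have hdle : dd hk q.1 ≤ MM hk q.1 := by omega
      have hC0 : (0:ℝ) < (Nat.choose n' (cnt ω' o - cnt ω' (jstar hk q.1) - 1) : ℝ) := by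
        have hh := Nat.choose_pos hdle
        rw [hddq, hMMq] at hh
        exact_mod_cast hh
      show w p q.1 / (Nat.choose (MM hk q.1) (dd hk q.1) : ℝ)
          ≤ w p ω' / (Nat.choose n' (cnt ω' o - cnt ω' (jstar hk q.1) - 1) : ℝ)
      rw [hMMq, hddq]
      exact (div_le_div_iff_of_pos_right hC0).2 f5
    -- injectivity of e on the fiber
    have hinj : ∀ q1 ∈ P.filter (fun q => modify q.1 o q.2 = ω'),
        ∀ q2 ∈ P.filter (fun q => modify q.1 o q.2 = ω'), e q1 = e q2 → q1 = q2 := by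
      intro q1 hq1 q2 hq2 heq
      obtain ⟨_, _, _, f4a, _, _, _, _⟩ := hfacts q1 hq1
      obtain ⟨_, _, _, f4b, _, _, _, _⟩ := hfacts q2 hq2
      obtain ⟨hj, hs⟩ := Sigma.ext_iff.1 heq
      have hj' : jstar hk q1.1 = jstar hk q2.1 := hj
      have hs' : q1.2 = q2.2 := eq_of_heq hs
      have hfst : q1.1 = q2.1 := by
        rw [f4a, f4b, hj', hs']
      exact Sigma.ext hfst (heq_of_eq hs')
    -- image inside target
    have himg : ∀ q ∈ P.filter (fun q => modify q.1 o q.2 = ω'), e q ∈ Tgt := by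
      intro q hq
      obtain ⟨f1, f2, f3, f4, f5, f6, f7, f8⟩ := hfacts q hq
      have heq : e q = ⟨jstar hk q.1, q.2⟩ := rfl
      rw [heq, hTgtdef, Finset.mem_sigma]
      simp only [Sigma.fst, Sigma.snd]
      constructor
      · rw [hfJ, Finset.mem_filter]
        refine ⟨Finset.mem_univ _, jstar_ne hk q.1, ?_⟩
        omega
      · rw [Finset.mem_powersetCard]
        constructor
        · intro x hx
          rw [Finset.mem_filter]
          exact ⟨Finset.mem_univ _, f8 x hx⟩
        · have hdd : dd hk q.1 = MM hk q.1 + 1 - cnt q.1 o := rfl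
          omega
    have hcnt_eq : (Finset.univ.filter fun x => ω' x = o).card = cnt ω' o := rfl
    -- per-j bound
    have hperj : ∀ j ∈ filterJ,
        ((cnt ω' o).choose (cnt ω' o - cnt ω' j - 1) : ℝ)
            * (w p ω' / (Nat.choose n' (cnt ω' o - cnt ω' j - 1) : ℝ))
          ≤ ((B+1 : ℝ)/(A : ℝ)) * w p ω' := by
      intro j hj
      rw [hfJ, Finset.mem_filter] at hj
      obtain ⟨-, hjne, hjA⟩ := hj
      have hjlt : cnt ω' j < cnt ω' o := w3 j hjne
      set dj := cnt ω' o - cnt ω' j - 1 with hdj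
      have hdjn' : dj ≤ n' := by omega
      have hm : n' + 1 - dj = cnt ω' j + 1 := by omega
      have hAm : A ≤ n' + 1 - dj := by omega
      have hratio := choose_ratio n' dj hdjn'
      have hC0 : (0:ℝ) < (Nat.choose n' dj : ℝ) := by
        exact_mod_cast Nat.choose_pos hdjn'
      have hm0 : (0:ℝ) < ((n' + 1 - dj : ℕ) : ℝ) := by
        have : 0 < n' + 1 - dj := by omega
        exact_mod_cast this
      have hkey : (Nat.choose (n'+1) dj : ℝ) / (Nat.choose n' dj : ℝ)
          = ((n'+1 : ℕ) : ℝ) / ((n' + 1 - dj : ℕ) : ℝ) := by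
        rw [div_eq_div_iff (ne_of_gt hC0) (ne_of_gt hm0)]
        have := congrArg (fun m : ℕ => (m : ℝ)) hratio
        push_cast at this ⊢
        linarith
      have hco' : cnt ω' o = n' + 1 := by omega
      calc ((cnt ω' o).choose dj : ℝ) * (w p ω' / (Nat.choose n' dj : ℝ))
          = ((Nat.choose (n'+1) dj : ℝ) / (Nat.choose n' dj : ℝ)) * w p ω' := by
            rw [hco']; ring
        _ = (((n'+1 : ℕ) : ℝ) / ((n' + 1 - dj : ℕ) : ℝ)) * w p ω' := by rw [hkey]
        _ ≤ ((B+1 : ℝ)/(A : ℝ)) * w p ω' := by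
            refine mul_le_mul_of_nonneg_right ?_ (w_nonneg hp0 ω')
            refine div_le_div₀ (by positivity) ?_ hA0R ?_
            · push_cast
              have : (n' : ℝ) ≤ (B : ℝ) := by exact_mod_cast hn'B
              linarith
            · exact_mod_cast hAm
    -- cardinality of filterJ
    have hcardJ : (filterJ.card : ℝ) ≤ (h:ℝ) / ((A:ℝ) - 1) := by
      have h1 : filterJ.card • (A - 1) ≤ ∑ j ∈ filterJ, cnt ω' j := by
        refine Finset.card_nsmul_le_sum filterJ (cnt ω') (A-1) ?_
        intro j hj
        exact ((Finset.mem_filter.1 hj).2).2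
      have h2 : ∑ j ∈ filterJ, cnt ω' j ≤ ∑ j, cnt ω' j :=
        Finset.sum_le_sum_of_subset (Finset.filter_subset _ _)
      have h3 : filterJ.card * (A - 1) ≤ h := by
        rw [← cnt_sum ω']
        calc filterJ.card * (A-1) = filterJ.card • (A-1) := by rw [smul_eq_mul]
          _ ≤ ∑ j ∈ filterJ, cnt ω' j := h1
          _ ≤ ∑ j, cnt ω' j := h2
      rw [le_div_iff₀ hA1R]
      have hcast : ((A : ℝ) - 1) = ((A - 1 : ℕ) : ℝ) := by
        have : 1 ≤ A := by omega
        push_cast [this]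
        ring
      rw [hcast]
      exact_mod_cast h3
    -- assemble step C
    have hchain : ∑ q ∈ P.filter (fun q => modify q.1 o q.2 = ω'), g q
        ≤ ((B+1 : ℝ)/(A : ℝ)) * ((h:ℝ)/((A:ℝ)-1)) * w p ω' := by
      calc ∑ q ∈ P.filter (fun q => modify q.1 o q.2 = ω'), g q
          ≤ ∑ q ∈ P.filter (fun q => modify q.1 o q.2 = ω'), bnd (e q) :=
            Finset.sum_le_sum hpt
        _ = ∑ r ∈ (P.filter (fun q => modify q.1 o q.2 = ω')).image e, bnd r :=
            (Finset.sum_image hinj).symm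
        _ ≤ ∑ r ∈ Tgt, bnd r := by
            refine Finset.sum_le_sum_of_subset_of_nonneg ?_ (fun r _ _ => hbnd0 r)
            rw [Finset.image_subset_iff]
            exact himg
        _ = ∑ j ∈ filterJ, ((cnt ω' o).choose (cnt ω' o - cnt ω' j - 1) : ℝ)
              * (w p ω' / (Nat.choose n' (cnt ω' o - cnt ω' j - 1) : ℝ)) := by
            rw [hTgtdef, Finset.sum_sigma]
            refine Finset.sum_congr rfl ?_
            intro j hj
            have hconst : ∀ s' ∈ (Finset.univ.filter fun x => ω' x = o).powersetCard
                (cnt ω' o - cnt ω' j - 1),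
                bnd ⟨j, s'⟩ = w p ω' / (Nat.choose n' (cnt ω' o - cnt ω' j - 1) : ℝ) :=
              fun _ _ => rfl
            rw [Finset.sum_congr rfl hconst, Finset.sum_const, Finset.card_powersetCard,
              hcnt_eq, nsmul_eq_mul]
        _ ≤ ∑ j ∈ filterJ, ((B+1 : ℝ)/(A : ℝ)) * w p ω' := Finset.sum_le_sum hperj
        _ = (filterJ.card : ℝ) * (((B+1 : ℝ)/(A : ℝ)) * w p ω') := by
            rw [Finset.sum_const, nsmul_eq_mul]
        _ ≤ ((h:ℝ)/((A:ℝ)-1)) * (((B+1 : ℝ)/(A : ℝ)) * w p ω') := by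
            refine mul_le_mul_of_nonneg_right hcardJ ?_
            exact mul_nonneg (by positivity) (w_nonneg hp0 ω')
        _ = ((B+1 : ℝ)/(A : ℝ)) * ((h:ℝ)/((A:ℝ)-1)) * w p ω' := by ring
    rw [if_pos w3]
    exact hchain
  -- assemble
  calc ∑ ω ∈ G, w p ω = ∑ q ∈ P, g q := stepA
    _ = ∑ ω' : Fin h → Fin k, ∑ q ∈ P.filter (fun q => modify q.1 o q.2 = ω'), g q := stepB
    _ ≤ ∑ ω' : Fin h → Fin k,
          ((B+1 : ℝ)/(A : ℝ)) * ((h:ℝ)/((A:ℝ)-1)) * (if BevP hk ω' then w p ω' else 0) :=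
        Finset.sum_le_sum (fun ω' _ => stepC ω')
    _ = ((B+1 : ℝ)/(A : ℝ)) * ((h:ℝ)/((A:ℝ)-1))
          * ∑ ω' : Fin h → Fin k, (if BevP hk ω' then w p ω' else 0) := by
        rw [← Finset.mul_sum]
    _ = ((B+1 : ℝ)/(A : ℝ)) * ((h:ℝ)/((A:ℝ)-1))
          * ∑ ω ∈ Finset.univ.filter (fun ω : Fin h → Fin k => BevP hk ω), w p ω := by
        rw [Finset.sum_filter]


end SMPLB

set_option maxHeartbeats 2000000 in
/-- there are constants `C, c > 0` such that for `n` large enough,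
`k ≤ n`, `p_1 ≥ p_2 ≥ … ≥ p_k` and `h·p_1 ≥ C·log n`, the probability that
opinion 1 is sampled strictly more than every other opinion is at least `c·p_1`. -/
theorem multinomial_strict_max_prob_lower_bound :
    ∃ C c : ℝ, 0 < C ∧ 0 < c ∧
      ∃ n0 : ℕ, ∀ (n k h : ℕ), n0 ≤ n → ∀ (hk : 2 ≤ k), 1 ≤ h → k ≤ n →
        ∀ p : Fin k → ℝ, (∀ i, 0 ≤ p i) → ∑ i, p i = 1 →
          (∀ i j : Fin k, i ≤ j → p j ≤ p i) →
          C * Real.log n ≤ (h : ℝ) * p (o₁ k hk) →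
          c * p (o₁ k hk) ≤
            multiPr k h p {ω | ∀ i, i ≠ o₁ k hk → cnt ω i < cnt ω (o₁ k hk)} := by
  classical
  refine ⟨90, 1/32, by norm_num, by norm_num, 128, ?_⟩
  intro n k h hn hk hh hkn p hp0 hsum hsorted hC
  set o := o₁ k hk with ho
  set μ : ℝ := (h : ℝ) * p o with hμdef
  -- basic numeric facts
  have hlog2u : Real.log 2 < 0.6931471808 := Real.log_two_lt_d9
  have hlog2l : (0.6931471803 : ℝ) < Real.log 2 := Real.log_two_gt_d9
  have hn128 : (128 : ℝ) ≤ (n : ℝ) := by exact_mod_cast hn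
  have hlog128 : Real.log 128 = 7 * Real.log 2 := by
    have : (128 : ℝ) = 2 ^ (7:ℕ) := by norm_num
    rw [this, Real.log_pow]
    norm_num
  have hlogn : (4.85 : ℝ) ≤ Real.log n := by
    have h1 : Real.log 128 ≤ Real.log n := by
      apply Real.log_le_log (by norm_num) hn128
    rw [hlog128] at h1
    linarith
  have hμ : 90 * Real.log n ≤ μ := hC
  have hμ436 : (436 : ℝ) ≤ μ := by linarith
  have hp1pos : 0 < p o := by
    rcases lt_or_ge 0 (p o) with hgt | hle
    · exact hgt
    · exfalso
      have : μ ≤ 0 := mul_nonpos_of_nonneg_of_nonpos (Nat.cast_nonneg h) hle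
      linarith
  have hp1le1 : p o ≤ 1 := by
    rw [← hsum]
    exact Finset.single_le_sum (fun i _ => hp0 i) (Finset.mem_univ o)
  have hpmax : ∀ i, p i ≤ p o := by
    intro i
    exact hsorted o i (by simp [ho, o₁, Fin.le_def])
  -- thresholds
  set A : ℕ := ⌈μ/2⌉₊ with hAdef
  set B : ℕ := ⌈2*μ⌉₊ with hBdef
  have hAl : μ/2 ≤ (A:ℝ) := Nat.le_ceil _
  have hAu : (A:ℝ) < μ/2 + 1 := Nat.ceil_lt_add_one (by linarith)
  have hBl : 2*μ ≤ (B:ℝ) := Nat.le_ceil _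
  have hBu : (B:ℝ) < 2*μ + 1 := Nat.ceil_lt_add_one (by linarith)
  have hA2 : 2 ≤ A := by
    have : (2:ℝ) ≤ (A:ℝ) := by linarith
    exact_mod_cast this
  have hAB : A ≤ B + 1 := by
    have : (A:ℝ) ≤ (B:ℝ) + 1 := by linarith
    exact_mod_cast this
  have hA1R : (0:ℝ) < (A:ℝ) - 1 := by
    have : (2:ℝ) ≤ (A:ℝ) := by exact_mod_cast hA2
    linarith
  clear_value A B
  clear_value μ
  -- identification of multiPr with a filtered sum
  have hmulti : multiPr k h p {ω | ∀ i, i ≠ o → cnt ω i < cnt ω o}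
      = ∑ ω ∈ Finset.univ.filter (fun ω : Fin h → Fin k => SMPLB.BevP hk ω), SMPLB.w p ω := by
    rw [multiPr, Finset.sum_filter]
    refine Finset.sum_congr rfl (fun ω _ => ?_)
    by_cases hb : SMPLB.BevP hk ω
    · have h1 : ω ∈ {ω : Fin h → Fin k | ∀ i, i ≠ o → cnt ω i < cnt ω o} := hb
      rw [Set.indicator_of_mem h1]
      simp only [hb, if_true]
      rfl
    · have h1 : ω ∉ {ω : Fin h → Fin k | ∀ i, i ≠ o → cnt ω i < cnt ω o} := hb
      rw [Set.indicator_of_notMem h1]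
      simp only [hb, if_false]
  set WB : ℝ := ∑ ω ∈ Finset.univ.filter (fun ω : Fin h → Fin k => SMPLB.BevP hk ω), SMPLB.w p ω
    with hWB
  set WG : ℝ := ∑ ω ∈ Finset.univ.filter
      (fun ω : Fin h → Fin k =>
        (A ≤ cnt ω o ∧ ∀ i, cnt ω i ≤ B) ∧ ¬ SMPLB.BevP hk ω), SMPLB.w p ω with hWG
  have hWB0 : 0 ≤ WB := Finset.sum_nonneg fun ω _ => SMPLB.w_nonneg hp0 ω
  -- total mass one
  have htot : ∑ ω : Fin h → Fin k, SMPLB.w p ω = 1 := by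
    have := SMPLB.sum_prod k p h
    rw [hsum, one_pow] at this
    exact this
  -- exp(-3) ≤ 1/8
  have hexp3 : ∀ x : ℝ, x ≤ -3 → Real.exp x ≤ 1/8 := by
    intro x hx
    have h8 : (8:ℝ) ≤ Real.exp 3 := by
      have h1 : (2.7:ℝ) < Real.exp 1 := by
        have := Real.exp_one_gt_d9
        linarith
      have h3 : Real.exp 3 = (Real.exp 1)^(3:ℕ) := by
        rw [← Real.exp_nat_mul]
        norm_num
      have h4 : (2.7:ℝ)^(3:ℕ) ≤ (Real.exp 1)^(3:ℕ) :=
        pow_le_pow_left₀ (by norm_num) h1.le 3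
      rw [h3]
      nlinarith [h4]
    have : Real.exp x ≤ Real.exp (-3) := Real.exp_le_exp.2 hx
    have hneg : Real.exp (-3:ℝ) = 1 / Real.exp 3 := by
      rw [Real.exp_neg, inv_eq_one_div]
    rw [hneg] at this
    have : Real.exp x ≤ 1/8 := by
      refine le_trans this ?_
      apply one_div_le_one_div_of_le (by norm_num) h8
    exact this
  -- lower tail
  set Slow : ℝ := ∑ ω ∈ Finset.univ.filter (fun ω : Fin h → Fin k => cnt ω o ≤ A - 1),
      SMPLB.w p ω with hSlow
  have hlow : Slow ≤ 1/8 := by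
    have ht := SMPLB.tail_le (h := h) p hp0 hsum o (1/2) (by norm_num) (by norm_num) (A-1)
    refine le_trans ht ?_
    have hbase : (1 + p o * ((1:ℝ)/2 - 1)) = 1 - p o / 2 := by ring
    rw [hbase]
    have h1A : 1 ≤ A := by omega
    have hm : ((A-1 : ℕ) : ℝ) ≤ μ/2 := by
      have hcst : ((A-1:ℕ):ℝ) = (A:ℝ) - 1 := by
        push_cast [h1A]
        ring
      linarith
    have hm0 : (0:ℝ) ≤ ((A-1 : ℕ) : ℝ) := Nat.cast_nonneg _
    have hstep1 : (1 - p o/2)^h ≤ Real.exp (-(μ/2)) := by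
      have h1 : (0:ℝ) ≤ 1 - p o/2 := by linarith
      have h2 : 1 - p o/2 ≤ Real.exp (-(p o/2)) := by
        have := Real.add_one_le_exp (-(p o/2))
        linarith
      calc (1 - p o/2)^h ≤ (Real.exp (-(p o/2)))^h := pow_le_pow_left₀ h1 h2 h
        _ = Real.exp ((h:ℝ) * (-(p o/2))) := (Real.exp_nat_mul _ h).symm
        _ = Real.exp (-(μ/2)) := by
            congr 1
            rw [hμdef]
            ring
    have hhalf : ((1:ℝ)/2)^(A-1) = ((2:ℝ)^(A-1))⁻¹ := by
      rw [one_div, inv_pow]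
    have h2pow : (2:ℝ)^(A-1) = Real.exp (((A-1:ℕ):ℝ) * Real.log 2) := by
      rw [Real.exp_nat_mul, Real.exp_log (by norm_num : (0:ℝ) < 2)]
    calc (1 - p o/2)^h / ((1:ℝ)/2)^(A-1)
        = (1 - p o/2)^h * (2:ℝ)^(A-1) := by rw [hhalf, div_eq_mul_inv, inv_inv]
      _ ≤ Real.exp (-(μ/2)) * (2:ℝ)^(A-1) := by
          refine mul_le_mul_of_nonneg_right hstep1 ?_
          positivity
      _ = Real.exp (((A-1:ℕ):ℝ) * Real.log 2 - μ/2) := by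
          rw [h2pow, ← Real.exp_add]
          congr 1
          ring
      _ ≤ 1/8 := by
          apply hexp3
          have hlg0 : (0:ℝ) ≤ Real.log 2 := by linarith
          have : ((A-1:ℕ):ℝ) * Real.log 2 ≤ (μ/2) * Real.log 2 :=
            mul_le_mul_of_nonneg_right hm hlg0
          nlinarith
  -- upper tail
  set Shigh : ℝ := ∑ i : Fin k, (∑ ω ∈ Finset.univ.filter
      (fun ω : Fin h → Fin k => B+1 ≤ cnt ω i), SMPLB.w p ω) with hShigh
  have hhigh : Shigh ≤ 1/8 := by
    have he1l : (2.7:ℝ) < Real.exp 1 := by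
      have := Real.exp_one_gt_d9
      linarith
    have he1u : Real.exp 1 < 2.7182818286 := Real.exp_one_lt_d9
    have hE : ∀ i : Fin k, (∑ ω ∈ Finset.univ.filter
        (fun ω : Fin h → Fin k => B+1 ≤ cnt ω i), SMPLB.w p ω)
        ≤ Real.exp ((Real.exp 1 - 3) * μ) := by
      intro i
      have ht := SMPLB.tail_ge (h := h) p hp0 hsum i (Real.exp 1) (by linarith) (B+1)
      refine le_trans ht ?_
      have he10 : (0:ℝ) ≤ Real.exp 1 - 1 := by linarith
      have hnum : (1 + p i * (Real.exp 1 - 1))^h ≤ Real.exp (μ * (Real.exp 1 - 1)) := by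
        have h1 : (0:ℝ) ≤ 1 + p i * (Real.exp 1 - 1) := by nlinarith [hp0 i]
        have h2 : 1 + p i * (Real.exp 1 - 1) ≤ Real.exp (p i * (Real.exp 1 - 1)) := by
          have := Real.add_one_le_exp (p i * (Real.exp 1 - 1))
          linarith
        calc (1 + p i * (Real.exp 1 - 1))^h
            ≤ (Real.exp (p i * (Real.exp 1 - 1)))^h := pow_le_pow_left₀ h1 h2 h
          _ = Real.exp ((h:ℝ) * (p i * (Real.exp 1 - 1))) := (Real.exp_nat_mul _ h).symm
          _ ≤ Real.exp (μ * (Real.exp 1 - 1)) := by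
              apply Real.exp_le_exp.2
              have hpi : (h:ℝ) * p i ≤ μ := by
                rw [hμdef]
                exact mul_le_mul_of_nonneg_left (hpmax i) (Nat.cast_nonneg h)
              nlinarith [(Nat.cast_nonneg h : (0:ℝ) ≤ (h:ℝ)), hp0 i]
      have hden : (Real.exp 1)^(B+1) = Real.exp (((B+1:ℕ)):ℝ) := by
        rw [← Real.exp_nat_mul, mul_one]
      calc (1 + p i * (Real.exp 1 - 1))^h / (Real.exp 1)^(B+1)
          ≤ Real.exp (μ * (Real.exp 1 - 1)) / (Real.exp 1)^(B+1) := by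
            exact (div_le_div_iff_of_pos_right (by positivity)).2 hnum
        _ = Real.exp (μ * (Real.exp 1 - 1) - ((B+1:ℕ):ℝ)) := by
            rw [hden, ← Real.exp_sub]
        _ ≤ Real.exp ((Real.exp 1 - 3) * μ) := by
            apply Real.exp_le_exp.2
            have hB' : 2*μ ≤ ((B:ℕ):ℝ) := hBl
            push_cast
            nlinarith
    have hlogn0 : (0:ℝ) < Real.log n := by linarith
    calc Shigh ≤ ∑ _i : Fin k, Real.exp ((Real.exp 1 - 3) * μ) := by
          rw [hShigh]
          exact Finset.sum_le_sum (fun i _ => hE i)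
      _ = (k:ℝ) * Real.exp ((Real.exp 1 - 3) * μ) := by
          rw [Finset.sum_const, Finset.card_univ, Fintype.card_fin, nsmul_eq_mul]
      _ ≤ (n:ℝ) * Real.exp (-25 * Real.log n) := by
          refine mul_le_mul (by exact_mod_cast hkn) ?_ (le_of_lt (Real.exp_pos _)) (Nat.cast_nonneg n)
          apply Real.exp_le_exp.2
          nlinarith
      _ = Real.exp (-24 * Real.log n) := by
          have hn0 : (0:ℝ) < (n:ℝ) := by linarith
          nth_rewrite 1 [← Real.exp_log hn0]
          rw [← Real.exp_add]
          congr 1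
          ring
      _ ≤ 1/8 := by
          apply hexp3
          nlinarith
  -- covering inequality
  have hcover : (1:ℝ) ≤ WG + WB + Slow + Shigh := by
    have hptw : ∀ ω : Fin h → Fin k, SMPLB.w p ω ≤
        (if (A ≤ cnt ω o ∧ ∀ i, cnt ω i ≤ B) ∧ ¬ SMPLB.BevP hk ω then SMPLB.w p ω else 0)
        + (if SMPLB.BevP hk ω then SMPLB.w p ω else 0)
        + (if cnt ω o ≤ A - 1 then SMPLB.w p ω else 0)
        + ∑ i, (if B+1 ≤ cnt ω i then SMPLB.w p ω else 0) := by
      intro ω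
      have hw := SMPLB.w_nonneg hp0 ω
      have hnn : ∀ (c : Prop) (inst : Decidable c), 0 ≤ @ite ℝ c inst (SMPLB.w p ω) 0 := by
        intro c inst
        split
        · exact hw
        · exact le_refl 0
      have hnn4 : 0 ≤ ∑ i, (if B+1 ≤ cnt ω i then SMPLB.w p ω else 0) :=
        Finset.sum_nonneg (fun i _ => hnn _ _)
      by_cases h1 : SMPLB.BevP hk ω
      · rw [if_pos h1]
        linarith [hnn ((A ≤ cnt ω o ∧ ∀ i, cnt ω i ≤ B) ∧ ¬ SMPLB.BevP hk ω) (by infer_instance),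
          hnn (cnt ω o ≤ A - 1) (by infer_instance)]
      by_cases h2 : cnt ω o ≤ A - 1
      · rw [if_pos h2]
        linarith [hnn ((A ≤ cnt ω o ∧ ∀ i, cnt ω i ≤ B) ∧ ¬ SMPLB.BevP hk ω) (by infer_instance),
          hnn (SMPLB.BevP hk ω) (by infer_instance)]
      by_cases h3 : ∃ i, B + 1 ≤ cnt ω i
      · obtain ⟨i0, hi0⟩ := h3
        have hle : SMPLB.w p ω ≤ ∑ i, (if B+1 ≤ cnt ω i then SMPLB.w p ω else 0) := by
          have h5 : (if B+1 ≤ cnt ω i0 then SMPLB.w p ω else 0)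
              ≤ ∑ i, (if B+1 ≤ cnt ω i then SMPLB.w p ω else 0) :=
            Finset.single_le_sum
              (f := fun i => if B+1 ≤ cnt ω i then SMPLB.w p ω else 0)
              (fun i _ => hnn _ _) (Finset.mem_univ i0)
          rwa [if_pos hi0] at h5
        linarith [hnn ((A ≤ cnt ω o ∧ ∀ i, cnt ω i ≤ B) ∧ ¬ SMPLB.BevP hk ω) (by infer_instance),
          hnn (SMPLB.BevP hk ω) (by infer_instance),
          hnn (cnt ω o ≤ A - 1) (by infer_instance)]
      · push_neg at h3
        have hGω : (A ≤ cnt ω o ∧ ∀ i, cnt ω i ≤ B) ∧ ¬ SMPLB.BevP hk ω := by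
          refine ⟨⟨by omega, fun i => by have := h3 i; omega⟩, h1⟩
        rw [if_pos hGω]
        linarith [hnn (SMPLB.BevP hk ω) (by infer_instance),
          hnn (cnt ω o ≤ A - 1) (by infer_instance)]
    have hsum_le : (1:ℝ) ≤ ∑ ω : Fin h → Fin k,
        ((if (A ≤ cnt ω o ∧ ∀ i, cnt ω i ≤ B) ∧ ¬ SMPLB.BevP hk ω then SMPLB.w p ω else 0)
        + (if SMPLB.BevP hk ω then SMPLB.w p ω else 0)
        + (if cnt ω o ≤ A - 1 then SMPLB.w p ω else 0)
        + ∑ i, (if B+1 ≤ cnt ω i then SMPLB.w p ω else 0)) := by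
      rw [← htot]
      exact Finset.sum_le_sum (fun ω _ => hptw ω)
    refine le_trans hsum_le (le_of_eq ?_)
    rw [Finset.sum_add_distrib, Finset.sum_add_distrib, Finset.sum_add_distrib]
    have e1 : ∑ ω : Fin h → Fin k,
        (if (A ≤ cnt ω o ∧ ∀ i, cnt ω i ≤ B) ∧ ¬ SMPLB.BevP hk ω then SMPLB.w p ω else 0)
        = WG := by rw [hWG, Finset.sum_filter]
    have e2 : ∑ ω : Fin h → Fin k, (if SMPLB.BevP hk ω then SMPLB.w p ω else 0) = WB := by
      rw [hWB, Finset.sum_filter]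
    have e3 : ∑ ω : Fin h → Fin k, (if cnt ω o ≤ A - 1 then SMPLB.w p ω else 0) = Slow := by
      rw [hSlow, Finset.sum_filter]
    have e4 : ∑ ω : Fin h → Fin k, (∑ i : Fin k, (if B+1 ≤ cnt ω i then SMPLB.w p ω else 0))
        = Shigh := by
      rw [hShigh, Finset.sum_comm]
      exact Finset.sum_congr rfl (fun i _ => by rw [Finset.sum_filter])
    rw [e1, e2, e3, e4]
  -- transport
  have htrans := SMPLB.transport (h := h) hk p hp0 hpmax A B hA2 hAB
  rw [← ho, ← hWG, ← hWB] at htrans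
  -- coefficient bound
  have hcoeff : ((B+1 : ℝ)/(A : ℝ)) * ((h:ℝ)/((A:ℝ)-1)) ≤ 15 / p o := by
    have hA0R : (0:ℝ) < (A:ℝ) := by linarith
    have hc1 : ((B+1:ℝ)/(A:ℝ)) ≤ 5 := by
      rw [div_le_iff₀ hA0R]
      linarith
    have hc2 : ((h:ℝ)/((A:ℝ)-1)) ≤ 3 / p o := by
      rw [div_le_div_iff₀ hA1R hp1pos]
      have hμeq : (h:ℝ) * p o = μ := hμdef.symm
      linarith
    have hh2 : (0:ℝ) ≤ (h:ℝ)/((A:ℝ)-1) := by positivity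
    calc ((B+1 : ℝ)/(A : ℝ)) * ((h:ℝ)/((A:ℝ)-1)) ≤ 5 * (3 / p o) :=
        mul_le_mul hc1 hc2 hh2 (by norm_num)
      _ = 15 / p o := by ring
  have hWGle : WG ≤ (15 / p o) * WB :=
    le_trans htrans (mul_le_mul_of_nonneg_right hcoeff hWB0)
  -- final arithmetic
  have hfin : (1/32 : ℝ) * p o ≤ WB := by
    have h1 : (3/4 : ℝ) ≤ (15 / p o + 1) * WB := by
      have : (15 / p o + 1) * WB = (15 / p o) * WB + WB := by ring
      rw [this]
      linarith
    have h2 : (15 / p o + 1) * WB ≤ (16 / p o) * WB := by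
      refine mul_le_mul_of_nonneg_right ?_ hWB0
      have heq : 15 / p o + 1 = (15 + p o) / p o := by
        field_simp
      rw [heq]
      exact (div_le_div_iff_of_pos_right hp1pos).2 (by linarith)
    have h3 : (3/4 : ℝ) ≤ (16 / p o) * WB := le_trans h1 h2
    rw [div_mul_eq_mul_div, le_div_iff₀ hp1pos] at h3
    nlinarith
  rw [hmulti]
  exact hfin
end
end

section
/- There exists a natural number n0 such that for all integers n ≥ n0 with k ≤ n the following holds: if p_1 ≥ p_2 ≥ … ≥ p_k and h·p_1 > 324·log n, then Pr(W_{1,2,strict}) ≥ (1/36)·(p_1 + p_2). -/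
open scoped BigOperators

noncomputable section

namespace SW
open Finset Real

variable {k : ℕ}

noncomputable def ind (P : Prop) : ℝ := letI := Classical.propDecidable P; if P then 1 else 0

lemma ind_nonneg (P : Prop) : 0 ≤ ind P := by unfold ind; split <;> norm_num
lemma ind_le_one (P : Prop) : ind P ≤ 1 := by unfold ind; split <;> norm_num
lemma ind_pos {P : Prop} (h : P) : ind P = 1 := by unfold ind; split <;> first | rfl | tauto
lemma ind_neg {P : Prop} (h : ¬ P) : ind P = 0 := by unfold ind; split <;> first | rfl | tauto
lemma ind_le_ind {P Q : Prop} (h : P → Q) : ind P ≤ ind Q := by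
  unfold ind; split <;> split <;> simp_all
lemma ind_mul_ind (P Q : Prop) : ind P * ind Q = ind (P ∧ Q) := by
  unfold ind; split <;> split <;> split <;> simp_all

def wt {n : ℕ} (p : Fin k → ℝ) (ω : Fin n → Fin k) : ℝ := ∏ l, p (ω l)

lemma wt_nonneg {n : ℕ} {p : Fin k → ℝ} (hp : ∀ i, 0 ≤ p i) (ω : Fin n → Fin k) :
    0 ≤ wt p ω := Finset.prod_nonneg fun _ _ => hp _

def mu (p : Fin k → ℝ) (n : ℕ) (χ : (Fin k → ℕ) → ℝ) : ℝ :=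
  ∑ ω : Fin n → Fin k, wt p ω * χ (cnt ω)

def addc (j : Fin k) (c : Fin k → ℕ) : Fin k → ℕ := fun i => c i + if i = j then 1 else 0

lemma addc_comm (j j' : Fin k) (c : Fin k → ℕ) : addc j (addc j' c) = addc j' (addc j c) := by
  funext i; simp [addc]; ring

lemma cnt_eq_sum {n : ℕ} (ω : Fin n → Fin k) (i : Fin k) :
    cnt ω i = ∑ l, if ω l = i then 1 else 0 := Finset.card_filter _ _

lemma cnt_le {n : ℕ} (ω : Fin n → Fin k) (i : Fin k) : cnt ω i ≤ n := by
  have := Finset.card_filter_le (Finset.univ : Finset (Fin n)) (fun j => ω j = i)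
  simpa [cnt] using this

lemma cnt_zero (ω : Fin 0 → Fin k) : cnt ω = fun _ => 0 := by
  funext i; simp [cnt]

lemma cnt_cons {n : ℕ} (j : Fin k) (g : Fin n → Fin k) :
    cnt (Fin.cons j g) = addc j (cnt g) := by
  funext i
  rw [cnt_eq_sum, Fin.sum_univ_succ]
  simp only [Fin.cons_zero, Fin.cons_succ, addc, ← cnt_eq_sum]
  rw [add_comm]
  congr 1
  by_cases hji : j = i
  · simp [hji]
  · rw [if_neg hji, if_neg (fun h : i = j => hji h.symm)]

lemma wt_cons {n : ℕ} (p : Fin k → ℝ) (j : Fin k) (g : Fin n → Fin k) :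
    wt p (Fin.cons j g) = p j * wt p g := by
  unfold wt
  rw [Fin.prod_univ_succ]
  simp

lemma mu_succ (p : Fin k → ℝ) (n : ℕ) (χ : (Fin k → ℕ) → ℝ) :
    mu p (n+1) χ = ∑ j, p j * mu p n (fun c => χ (addc j c)) := by
  unfold mu
  rw [← Equiv.sum_comp (Fin.consEquiv (fun _ : Fin (n+1) => Fin k))]
  rw [Fintype.sum_prod_type]
  refine Finset.sum_congr rfl fun j _ => ?_
  rw [Finset.mul_sum]
  refine Finset.sum_congr rfl fun g _ => ?_
  show wt p (Fin.cons j g) * χ (cnt (Fin.cons j g)) = _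
  rw [wt_cons, cnt_cons]
  ring

lemma mu_congr {p : Fin k → ℝ} {n : ℕ} {χ χ' : (Fin k → ℕ) → ℝ}
    (h : ∀ c : Fin k → ℕ, (∀ i, c i ≤ n) → χ c = χ' c) : mu p n χ = mu p n χ' := by
  unfold mu
  exact Finset.sum_congr rfl fun ω _ => by rw [h (cnt ω) (fun i => cnt_le ω i)]

lemma mu_zero (p : Fin k → ℝ) (n : ℕ) : mu p n (fun _ => (0:ℝ)) = 0 := by
  simp [mu]

lemma mu_nonneg {p : Fin k → ℝ} (hp : ∀ i, 0 ≤ p i) (n : ℕ) {χ : (Fin k → ℕ) → ℝ}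
    (hχ : ∀ c, 0 ≤ χ c) : 0 ≤ mu p n χ :=
  Finset.sum_nonneg fun ω _ => mul_nonneg (wt_nonneg hp ω) (hχ _)

lemma mu_mono {p : Fin k → ℝ} (hp : ∀ i, 0 ≤ p i) (n : ℕ) {χ χ' : (Fin k → ℕ) → ℝ}
    (hχ : ∀ c : Fin k → ℕ, (∀ i, c i ≤ n) → χ c ≤ χ' c) : mu p n χ ≤ mu p n χ' :=
  Finset.sum_le_sum fun ω _ =>
    mul_le_mul_of_nonneg_left (hχ (cnt ω) (fun i => cnt_le ω i)) (wt_nonneg hp ω)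

lemma mu_const_mul (p : Fin k → ℝ) (n : ℕ) (a : ℝ) (χ : (Fin k → ℕ) → ℝ) :
    mu p n (fun c => a * χ c) = a * mu p n χ := by
  unfold mu; rw [Finset.mul_sum]; exact Finset.sum_congr rfl fun ω _ => by ring

lemma mu_sum (p : Fin k → ℝ) (n : ℕ) {ι : Type*} (s : Finset ι) (F : ι → (Fin k → ℕ) → ℝ) :
    mu p n (fun c => ∑ t ∈ s, F t c) = ∑ t ∈ s, mu p n (F t) := by
  unfold mu
  rw [Finset.sum_comm]
  exact Finset.sum_congr rfl fun ω _ => by rw [Finset.mul_sum]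

lemma mu_empty (p : Fin k → ℝ) (χ : (Fin k → ℕ) → ℝ) : mu p 0 χ = χ (fun _ => 0) := by
  unfold mu
  rw [Fintype.sum_eq_single (fun l => l.elim0)]
  · rw [cnt_zero]; simp [wt]
  · intro ω h; exact absurd (funext fun l => l.elim0) h

lemma mu_one {p : Fin k → ℝ} (n : ℕ) : mu p n (fun _ => (1:ℝ)) = (∑ i, p i) ^ n := by
  induction n with
  | zero => simp [mu_empty]
  | succ n ih => rw [mu_succ]; simp only [ih]; rw [pow_succ]; rw [← Finset.sum_mul]; ring


def qv (p : Fin k → ℝ) (i1 : Fin k) : Fin k → ℝ := fun j => if j = i1 then 0 else p j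

lemma qv_apply_ne {p : Fin k → ℝ} {i1 j : Fin k} (h : j ≠ i1) : qv p i1 j = p j := if_neg h

lemma qv_apply_self {p : Fin k → ℝ} {i1 : Fin k} : qv p i1 i1 = 0 := if_pos rfl

lemma qv_nonneg {p : Fin k → ℝ} (hp : ∀ i, 0 ≤ p i) (i1 : Fin k) : ∀ j, 0 ≤ qv p i1 j := by
  intro j
  by_cases h : j = i1
  · rw [h, qv_apply_self]
  · rw [qv_apply_ne h]; exact hp j

lemma qv_sum (p : Fin k → ℝ) (i1 : Fin k) : ∑ j, qv p i1 j = (∑ j, p j) - p i1 := by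
  have : ∀ j, qv p i1 j = p j - (if j = i1 then p i1 else 0) := by
    intro j; unfold qv; split <;> simp_all
  rw [Finset.sum_congr rfl fun j _ => this j, Finset.sum_sub_distrib,
    Finset.sum_ite_eq' Finset.univ i1 (fun _ => p i1)]
  simp

lemma addc_self (j : Fin k) (c : Fin k → ℕ) : addc j c j = c j + 1 := by simp [addc]

lemma addc_ne {j i : Fin k} (h : i ≠ j) (c : Fin k → ℕ) : addc j c i = c i := by
  simp [addc, h]

lemma decomp (p : Fin k → ℝ) (i1 : Fin k) :
    ∀ (t n : ℕ) (Φ : (Fin k → ℕ) → ℝ), (∀ c, Φ (addc i1 c) = Φ c) →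
    mu p (t + n) (fun c => ind (c i1 = t) * Φ c)
      = (t + n).choose t * p i1 ^ t * mu (qv p i1) n Φ := by
  intro t
  induction t with
  | zero =>
    intro n
    induction n with
    | zero =>
      intro Φ hΦ
      simp [mu_empty, ind_pos]
    | succ n ihn =>
      intro Φ hΦ
      rw [show 0 + (n+1) = (0 + n) + 1 by omega, mu_succ]
      have hterm : ∀ j : Fin k,
          p j * mu p (0 + n) (fun c => ind (addc j c i1 = 0) * Φ (addc j c))
          = qv p i1 j * mu (qv p i1) n (fun c => Φ (addc j c)) := by
        intro j
        by_cases hj : j = i1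
        · rw [hj]
          have hz : mu p (0 + n) (fun c => ind (addc i1 c i1 = 0) * Φ (addc i1 c)) = 0 := by
            rw [mu_congr (χ' := fun _ => (0:ℝ)), mu_zero]
            intro c _
            rw [ind_neg (by rw [addc_self]; omega)]
            ring
          rw [hz, qv_apply_self]
          ring
        · have hre : mu p (0 + n) (fun c => ind (addc j c i1 = 0) * Φ (addc j c))
              = mu p (0 + n) (fun c => ind (c i1 = 0) * Φ (addc j c)) := by
            apply mu_congr
            intro c _
            rw [addc_ne (fun h => hj h.symm)]
          have hinv : ∀ c, (fun c => Φ (addc j c)) (addc i1 c) = (fun c => Φ (addc j c)) c := by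
            intro c
            show Φ (addc j (addc i1 c)) = Φ (addc j c)
            rw [addc_comm j i1, hΦ (addc j c)]
          rw [hre, ihn (fun c => Φ (addc j c)) hinv, qv_apply_ne hj]
          simp
      rw [Finset.sum_congr rfl fun j _ => hterm j, ← mu_succ]
      simp
  | succ t iht =>
    intro n
    induction n with
    | zero =>
      intro Φ hΦ
      rw [show t + 1 + 0 = t + 1 by omega, mu_succ]
      rw [Finset.sum_eq_single i1]
      · have hre : mu p t (fun c => ind (addc i1 c i1 = t + 1) * Φ (addc i1 c))
            = mu p (t + 0) (fun c => ind (c i1 = t) * Φ c) := by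
          apply mu_congr
          intro c _
          rw [hΦ c]
          congr 1
          rw [addc_self]
          congr 1
          simp [Nat.succ_inj]
        rw [hre, iht 0 Φ hΦ]
        simp [Nat.choose_self, pow_succ]
        ring
      · intro j _ hj
        have hz : mu p t (fun c => ind (addc j c i1 = t + 1) * Φ (addc j c)) = 0 := by
          rw [mu_congr (χ' := fun _ => (0:ℝ)), mu_zero]
          intro c hc
          rw [ind_neg (by rw [addc_ne (fun h => hj h.symm)]; have := hc i1; omega)]
          ring
        rw [hz]
        ring
      · intro h
        exact absurd (Finset.mem_univ i1) h
    | succ n ihn =>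
      intro Φ hΦ
      rw [show t + 1 + (n + 1) = (t + 1 + n) + 1 by omega, mu_succ]
      have hterm : ∀ j : Fin k, j ≠ i1 →
          p j * mu p (t + 1 + n) (fun c => ind (addc j c i1 = t + 1) * Φ (addc j c))
          = (t + 1 + n).choose (t + 1) * p i1 ^ (t + 1) *
              (qv p i1 j * mu (qv p i1) n (fun c => Φ (addc j c))) := by
        intro j hj
        have hre : mu p (t + 1 + n) (fun c => ind (addc j c i1 = t + 1) * Φ (addc j c))
            = mu p (t + 1 + n) (fun c => ind (c i1 = t + 1) * Φ (addc j c)) := by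
          apply mu_congr
          intro c _
          rw [addc_ne (fun h => hj h.symm)]
        have hinv : ∀ c, (fun c => Φ (addc j c)) (addc i1 c) = (fun c => Φ (addc j c)) c := by
          intro c
          show Φ (addc j (addc i1 c)) = Φ (addc j c)
          rw [addc_comm j i1, hΦ (addc j c)]
        rw [hre, ihn (fun c => Φ (addc j c)) hinv, qv_apply_ne hj]
        ring
      have hi1 : p i1 * mu p (t + 1 + n) (fun c => ind (addc i1 c i1 = t + 1) * Φ (addc i1 c))
          = (t + (n + 1)).choose t * p i1 ^ (t + 1) * mu (qv p i1) (n + 1) Φ := by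
        have hre : mu p (t + 1 + n) (fun c => ind (addc i1 c i1 = t + 1) * Φ (addc i1 c))
            = mu p (t + (n + 1)) (fun c => ind (c i1 = t) * Φ c) := by
          rw [show t + 1 + n = t + (n + 1) by omega]
          apply mu_congr
          intro c _
          rw [hΦ c]
          congr 1
          rw [addc_self]
          congr 1
          simp [Nat.succ_inj]
        rw [hre, iht (n + 1) Φ hΦ, pow_succ]
        ring
      rw [← Finset.add_sum_erase _ _ (Finset.mem_univ i1)]
      rw [Finset.sum_congr rfl (fun j hj => hterm j (Finset.ne_of_mem_erase hj)), hi1]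
      rw [← Finset.mul_sum]
      have hrest : ∑ j ∈ Finset.univ.erase i1, qv p i1 j * mu (qv p i1) n (fun c => Φ (addc j c))
          = mu (qv p i1) (n + 1) Φ := by
        rw [mu_succ (qv p i1) n Φ]
        rw [← Finset.add_sum_erase _
          (fun j => qv p i1 j * mu (qv p i1) n (fun c => Φ (addc j c))) (Finset.mem_univ i1)]
        rw [qv_apply_self, zero_mul, zero_add]
      rw [hrest]
      have hch : (t + 1 + n + 1).choose (t + 1)
          = (t + (n + 1)).choose t + (t + 1 + n).choose (t + 1) := by
        rw [Nat.choose_succ_succ]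
        congr 2
        omega
      rw [hch]
      push_cast
      ring

lemma mu_down {q : Fin k → ℝ} (hq : ∀ i, 0 ≤ q i) (n : ℕ) (E : (Fin k → ℕ) → Prop)
    (hE : ∀ j c, E (addc j c) → E c) :
    mu q (n + 1) (fun c => ind (E c)) ≤ (∑ j, q j) * mu q n (fun c => ind (E c)) := by
  rw [mu_succ, Finset.sum_mul]
  apply Finset.sum_le_sum
  intro j _
  exact mul_le_mul_of_nonneg_left
    (mu_mono hq n (fun c _ => ind_le_ind (hE j c))) (hq j)

lemma multiPr_eq_sum {h : ℕ} (p : Fin k → ℝ) (A : Set (Fin h → Fin k)) :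
    multiPr k h p A = ∑ ω : Fin h → Fin k, ind (ω ∈ A) * wt p ω := by
  unfold multiPr
  refine Finset.sum_congr rfl fun ω _ => ?_
  by_cases hω : ω ∈ A
  · rw [Set.indicator_of_mem hω, ind_pos hω, one_mul]; rfl
  · rw [Set.indicator_of_notMem hω, ind_neg hω, zero_mul]

lemma multiPr_cnt_sum {h : ℕ} (p : Fin k → ℝ) (P : (Fin k → ℕ) → Prop) :
    multiPr k h p {ω | P (cnt ω)} = ∑ ω : Fin h → Fin k, ind (P (cnt ω)) * wt p ω := by
  rw [multiPr_eq_sum]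
  rfl

lemma multiPr_cnt {h : ℕ} (p : Fin k → ℝ) (P : (Fin k → ℕ) → Prop) :
    multiPr k h p {ω | P (cnt ω)} = mu p h (fun c => ind (P c)) := by
  rw [multiPr_eq_sum]
  exact Finset.sum_congr rfl fun ω _ => by rw [mul_comm]; rfl

lemma multiPr_mono {h : ℕ} {p : Fin k → ℝ} (hp : ∀ i, 0 ≤ p i)
    {A B : Set (Fin h → Fin k)} (hAB : A ⊆ B) : multiPr k h p A ≤ multiPr k h p B := by
  rw [multiPr_eq_sum, multiPr_eq_sum]
  exact Finset.sum_le_sum fun ω _ =>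
    mul_le_mul_of_nonneg_right (ind_le_ind (fun hω => hAB hω)) (wt_nonneg hp ω)

lemma multiPr_nonneg {h : ℕ} {p : Fin k → ℝ} (hp : ∀ i, 0 ≤ p i)
    (A : Set (Fin h → Fin k)) : 0 ≤ multiPr k h p A := by
  rw [multiPr_eq_sum]
  exact Finset.sum_nonneg fun ω _ => mul_nonneg (ind_nonneg _) (wt_nonneg hp ω)

lemma mu_mgf (p : Fin k → ℝ) (j0 : Fin k) (lam : ℝ) (n : ℕ) :
    mu p n (fun c => lam ^ (c j0)) = ((∑ i, p i) + p j0 * (lam - 1)) ^ n := by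
  induction n with
  | zero => simp [mu_empty]
  | succ n ih =>
    rw [mu_succ]
    have hterm : ∀ j : Fin k,
        p j * mu p n (fun c => lam ^ (addc j c j0))
        = (p j + (if j0 = j then p j0 * (lam - 1) else 0)) * mu p n (fun c => lam ^ (c j0)) := by
      intro j
      by_cases hj : j0 = j
      · subst hj
        have : mu p n (fun c => lam ^ (addc j0 c j0)) = lam * mu p n (fun c => lam ^ (c j0)) := by
          rw [← mu_const_mul]
          apply mu_congr
          intro c _
          rw [addc_self, pow_succ]
          ring
        rw [this, if_pos rfl]
        ring
      · have : mu p n (fun c => lam ^ (addc j c j0)) = mu p n (fun c => lam ^ (c j0)) := by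
          apply mu_congr
          intro c _
          rw [addc_ne hj]
        rw [this, if_neg hj]
        ring
    rw [Finset.sum_congr rfl fun j _ => hterm j, ← Finset.sum_mul]
    have hco : ∑ j, (p j + (if j0 = j then p j0 * (lam - 1) else 0))
        = (∑ i, p i) + p j0 * (lam - 1) := by
      rw [Finset.sum_add_distrib, Finset.sum_ite_eq Finset.univ j0 (fun _ => p j0 * (lam - 1))]
      simp
    rw [hco, ih, pow_succ]
    ring

lemma pj_le_one {p : Fin k → ℝ} (hp : ∀ i, 0 ≤ p i) (hs : ∑ i, p i = 1) (j : Fin k) :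
    p j ≤ 1 := by
  rw [← hs]
  exact Finset.single_le_sum (fun i _ => hp i) (Finset.mem_univ j)

lemma chern_ge {p : Fin k → ℝ} (hp : ∀ i, 0 ≤ p i) (hs : ∑ i, p i = 1) (j0 : Fin k)
    (a n : ℕ) {lam : ℝ} (hlam : 1 ≤ lam) :
    mu p n (fun c => ind (a ≤ c j0)) ≤ Real.exp (n * (p j0 * (lam - 1))) * (lam ^ a)⁻¹ := by
  have hlam0 : (0:ℝ) < lam := lt_of_lt_of_le one_pos hlam
  have step1 : mu p n (fun c => ind (a ≤ c j0))
      ≤ mu p n (fun c => (lam ^ a)⁻¹ * lam ^ (c j0)) := by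
    apply mu_mono hp
    intro c _
    by_cases hc : a ≤ c j0
    · rw [ind_pos hc, inv_mul_eq_div, le_div_iff₀ (by positivity), one_mul]
      exact pow_le_pow_right₀ hlam hc
    · rw [ind_neg hc]
      positivity
  rw [mul_comm]
  refine step1.trans ?_
  rw [mu_const_mul]
  apply mul_le_mul_of_nonneg_left ?_ (by positivity)
  rw [mu_mgf, hs]
  have base : 1 + p j0 * (lam - 1) ≤ Real.exp (p j0 * (lam - 1)) := by
    have := Real.add_one_le_exp (p j0 * (lam - 1)); linarith
  have hb0 : (0:ℝ) ≤ 1 + p j0 * (lam - 1) := by nlinarith [hp j0]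
  have hpow : (1 + p j0 * (lam - 1)) ^ n ≤ Real.exp (p j0 * (lam - 1)) ^ n :=
    pow_le_pow_left₀ hb0 base n
  rw [← Real.exp_nat_mul] at hpow
  exact hpow

lemma chern_le {p : Fin k → ℝ} (hp : ∀ i, 0 ≤ p i) (hs : ∑ i, p i = 1) (j0 : Fin k)
    (a n : ℕ) {lam : ℝ} (hlam0 : 0 < lam) (hlam : lam ≤ 1) :
    mu p n (fun c => ind (c j0 ≤ a)) ≤ Real.exp (n * (p j0 * (lam - 1))) * (lam ^ a)⁻¹ := by
  have step1 : mu p n (fun c => ind (c j0 ≤ a))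
      ≤ mu p n (fun c => (lam ^ a)⁻¹ * lam ^ (c j0)) := by
    apply mu_mono hp
    intro c _
    by_cases hc : c j0 ≤ a
    · rw [ind_pos hc, inv_mul_eq_div, le_div_iff₀ (by positivity), one_mul]
      exact pow_le_pow_of_le_one hlam0.le hlam hc
    · rw [ind_neg hc]
      positivity
  rw [mul_comm]
  refine step1.trans ?_
  rw [mu_const_mul]
  apply mul_le_mul_of_nonneg_left ?_ (by positivity)
  rw [mu_mgf, hs]
  have base : 1 + p j0 * (lam - 1) ≤ Real.exp (p j0 * (lam - 1)) := by
    have := Real.add_one_le_exp (p j0 * (lam - 1)); linarith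
  have hb0 : (0:ℝ) ≤ 1 + p j0 * (lam - 1) := by nlinarith [hp j0, pj_le_one hp hs j0]
  have hpow : (1 + p j0 * (lam - 1)) ^ n ≤ Real.exp (p j0 * (lam - 1)) ^ n :=
    pow_le_pow_left₀ hb0 base n
  rw [← Real.exp_nat_mul] at hpow
  exact hpow

lemma exp_neg_le_inv_pow {n : ℕ} (hn : 1 ≤ n) (d : ℕ) {x : ℝ} (hx : (d:ℝ) * Real.log n ≤ x) :
    Real.exp (-x) ≤ ((n:ℝ)⁻¹) ^ d := by
  have hn0 : (0:ℝ) < n := by exact_mod_cast hn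
  have key : Real.exp (-((d:ℝ) * Real.log n)) = ((n:ℝ)⁻¹) ^ d := by
    rw [show -((d:ℝ) * Real.log n) = (d:ℝ) * (-Real.log n) by ring, Real.exp_nat_mul,
      Real.exp_neg, Real.exp_log hn0]
  calc Real.exp (-x) ≤ Real.exp (-((d:ℝ) * Real.log n)) := Real.exp_le_exp.2 (by linarith)
    _ = _ := key

lemma log_43 : Real.log (4/3) ≤ 3/10 := by
  rw [Real.log_le_iff_le_exp (by norm_num)]
  have h1 : ((1:ℝ) + 3/40) ^ 4 ≤ Real.exp (3/40) ^ 4 := by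
    apply pow_le_pow_left₀ (by norm_num)
    have := Real.add_one_le_exp (3/40 : ℝ); linarith
  rw [← Real.exp_nat_mul] at h1
  norm_num at h1 ⊢
  nlinarith [h1]

lemma log_32 : (2/5 : ℝ) ≤ Real.log (3/2) := by
  rw [Real.le_log_iff_exp_le (by norm_num)]
  by_contra hcon
  push_neg at hcon
  have h5 : ((3:ℝ)/2) ^ 5 < Real.exp (2/5) ^ 5 :=
    pow_lt_pow_left₀ hcon (by norm_num) (by norm_num)
  rw [← Real.exp_nat_mul] at h5
  norm_num at h5
  have h2 : Real.exp 2 < 7.39 := by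
    have h := Real.exp_one_lt_d9
    have : Real.exp 2 = Real.exp 1 ^ 2 := by
      rw [← Real.exp_nat_mul]; norm_num
    rw [this]
    nlinarith [Real.exp_pos 1]
  norm_num at h5
  linarith

lemma log_54 : (21/100 : ℝ) ≤ Real.log (5/4) := by
  rw [Real.le_log_iff_exp_le (by norm_num)]
  by_contra hcon
  push_neg at hcon
  have h5 : ((5:ℝ)/4) ^ 100 < Real.exp (21/100) ^ 100 :=
    pow_lt_pow_left₀ hcon (by norm_num) (by norm_num)
  rw [← Real.exp_nat_mul] at h5
  norm_num at h5
  have h2 : Real.exp 21 < (2.7182818286 : ℝ) ^ 21 := by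
    have : Real.exp 21 = Real.exp 1 ^ 21 := by
      rw [← Real.exp_nat_mul]; norm_num
    rw [this]
    exact pow_lt_pow_left₀ Real.exp_one_lt_d9 (Real.exp_pos 1).le (by norm_num)
  have h3 : ((2.7182818286 : ℝ)) ^ 21 < (5/4 : ℝ) ^ 100 := by norm_num
  linarith

lemma log_1e6 {n : ℕ} (hn : 1000000 ≤ n) : (13:ℝ) ≤ Real.log n := by
  have hn0 : (0:ℝ) < n := by
    have : 0 < n := by omega
    exact_mod_cast this
  rw [Real.le_log_iff_exp_le hn0]
  have : Real.exp 13 = Real.exp 1 ^ 13 := by rw [← Real.exp_nat_mul]; norm_num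
  have h2 : Real.exp 1 ^ 13 < (2.7182818286 : ℝ) ^ 13 :=
    pow_lt_pow_left₀ Real.exp_one_lt_d9 (Real.exp_pos 1).le (by norm_num)
  have h3 : ((2.7182818286 : ℝ)) ^ 13 ≤ 1000000 := by norm_num
  have hn' : (1000000 : ℝ) ≤ n := by exact_mod_cast hn
  linarith

lemma wt_eq_prod_pow {n : ℕ} (p : Fin k → ℝ) (ω : Fin n → Fin k) :
    wt p ω = ∏ j, p j ^ cnt ω j := by
  unfold wt cnt
  rw [← Finset.prod_fiberwise_of_maps_to (g := ω) (fun l _ => Finset.mem_univ (ω l))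
    (fun l => p (ω l))]
  refine Finset.prod_congr rfl fun j _ => ?_
  rw [Finset.prod_congr rfl (fun l hl => congrArg p (Finset.mem_filter.1 hl).2),
    Finset.prod_const]

lemma cnt_comp {n : ℕ} (σ : Equiv.Perm (Fin k)) (ω : Fin n → Fin k) (j : Fin k) :
    cnt (fun l => σ (ω l)) j = cnt ω (σ.symm j) := by
  unfold cnt
  congr 1
  apply Finset.filter_congr
  intro l _
  simp [Equiv.apply_eq_iff_eq_symm_apply]

lemma prod_pow_swap_le {p : Fin k → ℝ} (hp : ∀ i, 0 ≤ p i) {i1 i : Fin k}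
    (hpi : p i ≤ p i1) (c : Fin k → ℕ) (hc : c i ≤ c i1) :
    ∏ j, p j ^ (c (Equiv.swap i1 i j)) ≤ ∏ j, p j ^ c j := by
  by_cases hii : i = i1
  · subst hii
    simp [Equiv.swap_self]
  have hmem : i ∈ Finset.univ.erase i1 := Finset.mem_erase.2 ⟨hii, Finset.mem_univ i⟩
  have split1 : ∀ f : Fin k → ℝ, ∏ j, f j = f i1 * (f i * ∏ j ∈ (Finset.univ.erase i1).erase i, f j) := by
    intro f
    rw [← Finset.mul_prod_erase _ f (Finset.mem_univ i1), ← Finset.mul_prod_erase _ f hmem]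
  rw [split1 (fun j => p j ^ (c (Equiv.swap i1 i j))), split1 (fun j => p j ^ c j)]
  have hrest : ∏ j ∈ (Finset.univ.erase i1).erase i, p j ^ (c (Equiv.swap i1 i j))
      = ∏ j ∈ (Finset.univ.erase i1).erase i, p j ^ c j := by
    refine Finset.prod_congr rfl fun j hj => ?_
    have hj1 : j ≠ i := (Finset.mem_erase.1 hj).1
    have hj2 : j ≠ i1 := (Finset.mem_erase.1 (Finset.mem_erase.1 hj).2).1
    rw [Equiv.swap_apply_of_ne_of_ne hj2 hj1]
  rw [hrest, Equiv.swap_apply_left, Equiv.swap_apply_right]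
  have key : p i1 ^ c i * p i ^ c i1 ≤ p i1 ^ c i1 * p i ^ c i := by
    have hd : c i1 = c i + (c i1 - c i) := by omega
    rw [hd, pow_add, pow_add]
    have h1 : p i ^ (c i1 - c i) ≤ p i1 ^ (c i1 - c i) := pow_le_pow_left₀ (hp i) hpi _
    have h2 : (0:ℝ) ≤ p i1 ^ c i * p i ^ c i :=
      mul_nonneg (pow_nonneg (hp i1) _) (pow_nonneg (hp i) _)
    nlinarith [pow_nonneg (hp i) (c i1 - c i), pow_nonneg (hp i1) (c i),
      pow_nonneg (hp i) (c i)]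
  have hrpos : (0:ℝ) ≤ ∏ j ∈ (Finset.univ.erase i1).erase i, p j ^ c j :=
    Finset.prod_nonneg fun j _ => pow_nonneg (hp j) _
  calc p i1 ^ c i * (p i ^ c i1 * ∏ j ∈ (Finset.univ.erase i1).erase i, p j ^ c j)
      = (p i1 ^ c i * p i ^ c i1) * ∏ j ∈ (Finset.univ.erase i1).erase i, p j ^ c j := by ring
    _ ≤ (p i1 ^ c i1 * p i ^ c i) * ∏ j ∈ (Finset.univ.erase i1).erase i, p j ^ c j :=
        mul_le_mul_of_nonneg_right key hrpos
    _ = p i1 ^ c i1 * (p i ^ c i * ∏ j ∈ (Finset.univ.erase i1).erase i, p j ^ c j) := by ring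

lemma swap_compare {h : ℕ} {p : Fin k → ℝ} (hp : ∀ i, 0 ≤ p i) (i1 i : Fin k)
    (hpi : p i ≤ p i1) (PA PB : (Fin k → ℕ) → Prop)
    (himp : ∀ c : Fin k → ℕ, PA (fun j => c (Equiv.swap i1 i j)) → PB c)
    (hge : ∀ c : Fin k → ℕ, PA c → c i1 ≤ c i) :
    multiPr k h p {ω | PA (cnt ω)} ≤ multiPr k h p {ω | PB (cnt ω)} := by
  rw [multiPr_eq_sum, multiPr_eq_sum]
  set σ := Equiv.swap i1 i with hσ
  have hreidx : ∑ ω : Fin h → Fin k, ind ((fun ω' => PA (cnt ω')) ω) * wt p ω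
      = ∑ ω : Fin h → Fin k, ind (PA (cnt (fun l => σ (ω l)))) * wt p (fun l => σ (ω l)) := by
    exact (Fintype.sum_equiv (Equiv.arrowCongr (Equiv.refl (Fin h)) σ) _ _
      (fun ω => by rfl)).symm
  rw [show (∑ ω : Fin h → Fin k, ind (ω ∈ {ω' | PA (cnt ω')}) * wt p ω)
      = ∑ ω : Fin h → Fin k, ind (PA (cnt ω)) * wt p ω from rfl]
  rw [hreidx]
  apply Finset.sum_le_sum
  intro ω _
  by_cases hA : PA (cnt (fun l => σ (ω l)))
  · have hcnt : ∀ j, cnt (fun l => σ (ω l)) j = cnt ω (σ j) := by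
      intro j
      rw [cnt_comp σ ω j, Equiv.symm_swap]
    have hA' : PA (fun j => cnt ω (σ j)) := by
      have : (fun j => cnt ω (σ j)) = cnt (fun l => σ (ω l)) := by
        funext j; rw [hcnt j]
      rw [this]; exact hA
    have hB : PB (cnt ω) := himp (cnt ω) hA'
    have hge' : cnt ω i ≤ cnt ω i1 := by
      have := hge _ hA'
      simpa [σ, Equiv.swap_apply_left, Equiv.swap_apply_right] using this
    have hwt : wt p (fun l => σ (ω l)) ≤ wt p ω := by
      rw [wt_eq_prod_pow, wt_eq_prod_pow]
      have : ∀ j, cnt (fun l => σ (ω l)) j = cnt ω (σ j) := hcnt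
      rw [Finset.prod_congr rfl fun j _ => by rw [this j]]
      exact prod_pow_swap_le hp hpi (cnt ω) hge'
    calc ind (PA (cnt fun l => σ (ω l))) * wt p (fun l => σ (ω l))
        ≤ 1 * wt p (fun l => σ (ω l)) :=
          mul_le_mul_of_nonneg_right (ind_le_one _) (wt_nonneg hp _)
      _ = wt p (fun l => σ (ω l)) := one_mul _
      _ ≤ wt p ω := hwt
      _ = 1 * wt p ω := (one_mul _).symm
      _ = ind (PB (cnt ω)) * wt p ω := by rw [ind_pos hB]
  · rw [ind_neg hA, zero_mul]
    exact mul_nonneg (ind_nonneg _) (wt_nonneg hp ω)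

lemma multiPr_union_cnt {h : ℕ} {p : Fin k → ℝ} (hp : ∀ i, 0 ≤ p i)
    (s : Finset (Fin k)) (P : (Fin k → ℕ) → Prop) (Q : Fin k → (Fin k → ℕ) → Prop)
    (hcov : ∀ c : Fin k → ℕ, P c → ∃ i ∈ s, Q i c) :
    multiPr k h p {ω | P (cnt ω)} ≤ ∑ i ∈ s, multiPr k h p {ω | Q i (cnt ω)} := by
  rw [multiPr_cnt_sum]
  have heq : ∀ i, multiPr k h p {ω | Q i (cnt ω)}
      = ∑ ω : Fin h → Fin k, ind (Q i (cnt ω)) * wt p ω := fun i => multiPr_cnt_sum p _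
  rw [Finset.sum_congr rfl fun i _ => heq i, Finset.sum_comm]
  apply Finset.sum_le_sum
  intro ω _
  rw [← Finset.sum_mul]
  apply mul_le_mul_of_nonneg_right ?_ (wt_nonneg hp ω)
  by_cases hP : P (cnt ω)
  · obtain ⟨i0, hi0, hQ⟩ := hcov (cnt ω) hP
    calc ind (P (cnt ω)) = 1 := ind_pos hP
      _ = ind (Q i0 (cnt ω)) := (ind_pos hQ).symm
      _ ≤ ∑ i ∈ s, ind (Q i (cnt ω)) :=
          Finset.single_le_sum (f := fun i => ind (Q i (cnt ω))) (fun i _ => ind_nonneg _) hi0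
  · rw [ind_neg hP]
    exact Finset.sum_nonneg fun i _ => ind_nonneg _

lemma multiPr_total {h : ℕ} {p : Fin k → ℝ} (hp : ∀ i, 0 ≤ p i) (hs : ∑ i, p i = 1)
    (P1 P2 : (Fin k → ℕ) → Prop) (s : Finset (Fin k)) (Q : Fin k → (Fin k → ℕ) → Prop)
    (hcov : ∀ c : Fin k → ℕ, P1 c ∨ P2 c ∨ ∃ j ∈ s, Q j c) :
    1 ≤ multiPr k h p {ω | P1 (cnt ω)} + multiPr k h p {ω | P2 (cnt ω)}
        + ∑ j ∈ s, multiPr k h p {ω | Q j (cnt ω)} := by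
  have h1 : (1:ℝ) = ∑ ω : Fin h → Fin k, wt p ω * 1 := by
    have := mu_one (p := p) (n := h)
    unfold mu at this
    rw [this, hs, one_pow]
  rw [h1, multiPr_cnt_sum, multiPr_cnt_sum]
  have heq : ∀ j, multiPr k h p {ω | Q j (cnt ω)}
      = ∑ ω : Fin h → Fin k, ind (Q j (cnt ω)) * wt p ω := fun j => multiPr_cnt_sum p _
  rw [Finset.sum_congr rfl fun j _ => heq j, Finset.sum_comm]
  rw [← Finset.sum_add_distrib, ← Finset.sum_add_distrib]
  apply Finset.sum_le_sum
  intro ω _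
  have hw := wt_nonneg hp ω
  have key : (1:ℝ) ≤ ind (P1 (cnt ω)) + ind (P2 (cnt ω)) + ∑ j ∈ s, ind (Q j (cnt ω)) := by
    rcases hcov (cnt ω) with hc | hc | ⟨j0, hj0, hQ⟩
    · have := ind_pos hc
      have h2 := ind_nonneg (P2 (cnt ω))
      have h3 : (0:ℝ) ≤ ∑ j ∈ s, ind (Q j (cnt ω)) := Finset.sum_nonneg fun j _ => ind_nonneg _
      linarith
    · have := ind_pos hc
      have h2 := ind_nonneg (P1 (cnt ω))
      have h3 : (0:ℝ) ≤ ∑ j ∈ s, ind (Q j (cnt ω)) := Finset.sum_nonneg fun j _ => ind_nonneg _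
      linarith
    · have h4 : (1:ℝ) ≤ ∑ j ∈ s, ind (Q j (cnt ω)) := by
        calc (1:ℝ) = ind (Q j0 (cnt ω)) := (ind_pos hQ).symm
          _ ≤ _ := Finset.single_le_sum (f := fun j => ind (Q j (cnt ω)))
            (fun j _ => ind_nonneg _) hj0
      have h2 := ind_nonneg (P1 (cnt ω))
      have h3 := ind_nonneg (P2 (cnt ω))
      linarith
  calc wt p ω * 1 = 1 * wt p ω := by ring
    _ ≤ (ind (P1 (cnt ω)) + ind (P2 (cnt ω)) + ∑ j ∈ s, ind (Q j (cnt ω))) * wt p ω :=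
        mul_le_mul_of_nonneg_right key hw
    _ = ind (P1 (cnt ω)) * wt p ω + (ind (P2 (cnt ω)) * wt p ω
        + (∑ j ∈ s, ind (Q j (cnt ω))) * wt p ω) := by ring
    _ = _ := by rw [Finset.sum_mul]; ring

lemma cover_exists (Big : Finset (Fin k)) (c : Fin k → ℕ) (i1 : Fin k) (hi1 : i1 ∈ Big) :
    ∃ i ∈ Big, (∀ j ∈ Big, c j ≤ c i) ∧ (∀ j ∈ Big, j < i → c j < c i) := by
  classical
  obtain ⟨i0, hi0, hmax⟩ := Finset.exists_max_image Big c ⟨i1, hi1⟩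
  set A := Big.filter (fun j => ∀ j' ∈ Big, c j' ≤ c j) with hA
  have hAne : A.Nonempty := ⟨i0, Finset.mem_filter.2 ⟨hi0, hmax⟩⟩
  refine ⟨A.min' hAne, ?_, ?_, ?_⟩
  · exact (Finset.mem_filter.1 (A.min'_mem hAne)).1
  · exact (Finset.mem_filter.1 (A.min'_mem hAne)).2
  · intro j hj hlt
    by_contra hcon
    push_neg at hcon
    have hmaxA := (Finset.mem_filter.1 (A.min'_mem hAne)).2
    have hje : c j = c (A.min' hAne) := le_antisymm (hmaxA j hj) hcon
    have hjA : j ∈ A := Finset.mem_filter.2 ⟨hj, fun j' hj' => hje ▸ hmaxA j' hj'⟩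
    exact absurd (A.min'_le j hjA) (not_le.2 hlt)

lemma ind_congr {P Q : Prop} (h : P ↔ Q) : ind P = ind Q := congrArg ind (propext h)

lemma event_decomp {h : ℕ} (p : Fin k → ℝ) (i1 : Fin k) (P : ℕ → Prop)
    (Φ : ℕ → (Fin k → ℕ) → Prop)
    (hΦ : ∀ (t : ℕ) (c : Fin k → ℕ), Φ t (addc i1 c) ↔ Φ t c) :
    multiPr k h p {ω | P (cnt ω i1) ∧ Φ (cnt ω i1) (cnt ω)}
      = ∑ t ∈ Finset.range (h+1),
          ind (P t) * ((h.choose t : ℝ) * p i1 ^ t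
            * mu (qv p i1) (h - t) (fun c => ind (Φ t c))) := by
  have e : multiPr k h p {ω | P (cnt ω i1) ∧ Φ (cnt ω i1) (cnt ω)}
      = mu p h (fun c => ind (P (c i1) ∧ Φ (c i1) c)) :=
    multiPr_cnt p (fun c => P (c i1) ∧ Φ (c i1) c)
  rw [e]
  have hsplit : mu p h (fun c => ind (P (c i1) ∧ Φ (c i1) c))
      = mu p h (fun c => ∑ t ∈ Finset.range (h+1),
          ind (c i1 = t) * (ind (P t) * ind (Φ t c))) := by
    apply mu_congr
    intro c hc
    rw [Finset.sum_eq_single (c i1)]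
    · rw [ind_pos rfl, one_mul, ind_mul_ind]
    · intro t _ htne
      have : ¬ (c i1 = t) := fun hc => htne hc.symm
      rw [ind_neg this, zero_mul]
    · intro hmem
      exact absurd (Finset.mem_range.2 (Nat.lt_succ_of_le (hc i1))) hmem
  rw [hsplit, mu_sum]
  refine Finset.sum_congr rfl fun t ht => ?_
  have hth : t ≤ h := Nat.lt_succ_iff.1 (Finset.mem_range.1 ht)
  have hht : t + (h - t) = h := by omega
  have hinv : ∀ c, (fun c => ind (P t) * ind (Φ t c)) (addc i1 c)
      = (fun c => ind (P t) * ind (Φ t c)) c := by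
    intro c
    show ind (P t) * ind (Φ t (addc i1 c)) = ind (P t) * ind (Φ t c)
    rw [ind_congr (hΦ t c)]
  have base := decomp p i1 t (h - t) (fun c => ind (P t) * ind (Φ t c)) hinv
  rw [hht] at base
  rw [base, mu_const_mul]
  ring

lemma mu_le_pow {q : Fin k → ℝ} (hq : ∀ i, 0 ≤ q i) (n : ℕ) (E : (Fin k → ℕ) → Prop) :
    mu q n (fun c => ind (E c)) ≤ (∑ j, q j) ^ n := by
  calc mu q n (fun c => ind (E c)) ≤ mu q n (fun _ => (1:ℝ)) :=
        mu_mono hq n (fun c _ => ind_le_one _)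
    _ = (∑ j, q j) ^ n := mu_one n

lemma pow_eq_exp_log (b : ℝ) (hb : 0 < b) (a : ℕ) : b ^ a = Real.exp (a * Real.log b) := by
  rw [Real.exp_nat_mul, Real.exp_log hb]

lemma tail_low {h n : ℕ} {p : Fin k → ℝ} (hp0 : ∀ i, 0 ≤ p i) (hps : ∑ i, p i = 1)
    (i1 : Fin k) (a : ℕ) (ha : (a:ℝ) ≤ 3/4 * ((h:ℝ) * p i1)) (hn : 1 ≤ n)
    (hX : 324 * Real.log n ≤ (h:ℝ) * p i1) (hlog : 0 ≤ Real.log n) :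
    multiPr k h p {ω | cnt ω i1 ≤ a} ≤ ((n:ℝ)⁻¹) ^ 8 := by
  set X := (h:ℝ) * p i1 with hXdef
  have hX0 : 0 ≤ X := le_trans (by positivity) hX
  have e : multiPr k h p {ω | cnt ω i1 ≤ a} = mu p h (fun c => ind (c i1 ≤ a)) :=
    multiPr_cnt p (fun c => c i1 ≤ a)
  rw [e]
  have hch := chern_le hp0 hps i1 a h (lam := 3/4) (by norm_num) (by norm_num)
  have e1 : (((3:ℝ)/4) ^ a)⁻¹ = ((4:ℝ)/3) ^ a := by
    rw [← inv_pow]; norm_num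
  have e2 : ((4:ℝ)/3) ^ a = Real.exp (a * Real.log (4/3)) :=
    pow_eq_exp_log _ (by norm_num) a
  have hexp : Real.exp ((h:ℝ) * (p i1 * (3/4 - 1))) * (((3:ℝ)/4) ^ a)⁻¹
      = Real.exp (-(X/4) + a * Real.log (4/3)) := by
    rw [e1, e2, ← Real.exp_add]
    congr 1
    rw [hXdef]; ring
  have hbound : -(X/4) + a * Real.log (4/3) ≤ -(X/40) := by
    have h1 : (a:ℝ) * Real.log (4/3) ≤ (3/4 * X) * (3/10) := by
      apply mul_le_mul ha log_43 (Real.log_nonneg (by norm_num)) (by linarith)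
    linarith
  have hfin : 8 * Real.log n ≤ X/40 := by linarith
  calc mu p h (fun c => ind (c i1 ≤ a)) ≤ _ := hch
    _ = Real.exp (-(X/4) + a * Real.log (4/3)) := hexp
    _ ≤ Real.exp (-(X/40)) := Real.exp_le_exp.2 hbound
    _ ≤ ((n:ℝ)⁻¹) ^ 8 := by
        have := exp_neg_le_inv_pow hn 8 (x := X/40) (by push_cast; linarith)
        exact this

lemma tail_high {h n : ℕ} {p : Fin k → ℝ} (hp0 : ∀ i, 0 ≤ p i) (hps : ∑ i, p i = 1)
    (i1 j : Fin k) (a : ℕ) (hq : p j ≤ p i1 / 2)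
    (ha : 3/4 * ((h:ℝ) * p i1) ≤ a) (hn : 1 ≤ n)
    (hX : 324 * Real.log n ≤ (h:ℝ) * p i1) (hlog : 0 ≤ Real.log n) :
    multiPr k h p {ω | a ≤ cnt ω j} ≤ ((n:ℝ)⁻¹) ^ 16 := by
  set X := (h:ℝ) * p i1 with hXdef
  have hX0 : 0 ≤ X := le_trans (by positivity) hX
  have e : multiPr k h p {ω | a ≤ cnt ω j} = mu p h (fun c => ind (a ≤ c j)) :=
    multiPr_cnt p (fun c => a ≤ c j)
  rw [e]
  have hch := chern_ge hp0 hps j a h (lam := 3/2) (by norm_num)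
  have e2 : (((3:ℝ)/2) ^ a)⁻¹ = Real.exp (-(a * Real.log (3/2))) := by
    rw [pow_eq_exp_log _ (by norm_num) a, ← Real.exp_neg]
  have hexp : Real.exp ((h:ℝ) * (p j * (3/2 - 1))) * (((3:ℝ)/2) ^ a)⁻¹
      = Real.exp ((h:ℝ) * (p j * (1/2)) - a * Real.log (3/2)) := by
    rw [e2, ← Real.exp_add]
    congr 1
    ring
  have hb1 : (h:ℝ) * (p j * (1/2)) ≤ X / 4 := by
    have hh0 : (0:ℝ) ≤ h := Nat.cast_nonneg h
    have : (h:ℝ) * p j ≤ (h:ℝ) * (p i1 / 2) := mul_le_mul_of_nonneg_left hq hh0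
    rw [hXdef]
    nlinarith
  have hb2 : (3/4 * X) * (2/5) ≤ (a:ℝ) * Real.log (3/2) := by
    apply mul_le_mul ha log_32 (by norm_num) (by positivity)
  have hbound : (h:ℝ) * (p j * (1/2)) - a * Real.log (3/2) ≤ -(X/20) := by linarith
  have hfin : 16 * Real.log n ≤ X/20 := by linarith
  calc mu p h (fun c => ind (a ≤ c j)) ≤ _ := hch
    _ = Real.exp ((h:ℝ) * (p j * (1/2)) - a * Real.log (3/2)) := hexp
    _ ≤ Real.exp (-(X/20)) := Real.exp_le_exp.2 (by linarith)
    _ ≤ ((n:ℝ)⁻¹) ^ 16 := exp_neg_le_inv_pow hn 16 (x := X/20) (by push_cast; linarith)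

lemma tail_up {h n : ℕ} {p : Fin k → ℝ} (hp0 : ∀ i, 0 ≤ p i) (hps : ∑ i, p i = 1)
    (i1 : Fin k) (a : ℕ) (ha : 5/4 * ((h:ℝ) * p i1) ≤ a) (hn : 1 ≤ n)
    (hX : 324 * Real.log n ≤ (h:ℝ) * p i1) (hlog : 0 ≤ Real.log n) :
    multiPr k h p {ω | a ≤ cnt ω i1} ≤ ((n:ℝ)⁻¹) ^ 4 := by
  set X := (h:ℝ) * p i1 with hXdef
  have hX0 : 0 ≤ X := le_trans (by positivity) hX
  have e : multiPr k h p {ω | a ≤ cnt ω i1} = mu p h (fun c => ind (a ≤ c i1)) :=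
    multiPr_cnt p (fun c => a ≤ c i1)
  rw [e]
  have hch := chern_ge hp0 hps i1 a h (lam := 5/4) (by norm_num)
  have e2 : (((5:ℝ)/4) ^ a)⁻¹ = Real.exp (-(a * Real.log (5/4))) := by
    rw [pow_eq_exp_log _ (by norm_num) a, ← Real.exp_neg]
  have hexp : Real.exp ((h:ℝ) * (p i1 * (5/4 - 1))) * (((5:ℝ)/4) ^ a)⁻¹
      = Real.exp (X/4 - a * Real.log (5/4)) := by
    rw [e2, ← Real.exp_add]
    congr 1
    rw [hXdef]; ring
  have hb2 : (5/4 * X) * (21/100) ≤ (a:ℝ) * Real.log (5/4) := by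
    apply mul_le_mul ha log_54 (by norm_num) (by positivity)
  have hfin : 4 * Real.log n ≤ X/80 := by linarith
  calc mu p h (fun c => ind (a ≤ c i1)) ≤ _ := hch
    _ = Real.exp (X/4 - a * Real.log (5/4)) := hexp
    _ ≤ Real.exp (-(X/80)) := Real.exp_le_exp.2 (by linarith)
    _ ≤ ((n:ℝ)⁻¹) ^ 4 := exp_neg_le_inv_pow hn 4 (x := X/80) (by push_cast; linarith)

open Classical in
noncomputable def BigF (p : Fin k → ℝ) (i1 : Fin k) : Finset (Fin k) :=
  Finset.univ.filter (fun j => p i1 / 2 < p j)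

def PhiL (p : Fin k → ℝ) (i1 : Fin k) (m t : ℕ) (c : Fin k → ℕ) : Prop :=
  (∀ j ∈ BigF p i1, j ≠ i1 → c j ≤ t) ∧ (∀ j, j ∉ BigF p i1 → c j < m)

def LPfull (p : Fin k → ℝ) (i1 : Fin k) (m : ℕ) (i : Fin k) (c : Fin k → ℕ) : Prop :=
  m ≤ c i ∧ (∀ j ∈ BigF p i1, c j ≤ c i) ∧ (∀ j ∈ BigF p i1, j < i → c j < c i)
    ∧ (∀ j, j ∉ BigF p i1 → c j < m)

def CPred (p : Fin k → ℝ) (i1 : Fin k) (m : ℕ) (c : Fin k → ℕ) : Prop :=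
  m ≤ c i1 ∧ (∀ j, j ∉ BigF p i1 → c j < m)

lemma mem_BigF {p : Fin k → ℝ} {i1 j : Fin k} : j ∈ BigF p i1 ↔ p i1 / 2 < p j := by
  unfold BigF
  simp

lemma i1_mem_BigF {p : Fin k → ℝ} {i1 : Fin k} (h : 0 < p i1) : i1 ∈ BigF p i1 :=
  mem_BigF.2 (by linarith)

lemma PhiL_inv {p : Fin k → ℝ} {i1 : Fin k} (hp1 : 0 < p i1) (m t : ℕ) (c : Fin k → ℕ) :
    PhiL p i1 m t (addc i1 c) ↔ PhiL p i1 m t c := by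
  have hpt : ∀ j, j ≠ i1 → addc i1 c j = c j := fun j hj => addc_ne hj c
  unfold PhiL
  constructor
  · rintro ⟨h1, h2⟩
    refine ⟨fun j hj hne => ?_, fun j hj => ?_⟩
    · rw [← hpt j hne]; exact h1 j hj hne
    · rw [← hpt j (fun e => hj (by rw [e]; exact i1_mem_BigF hp1))]; exact h2 j hj
  · rintro ⟨h1, h2⟩
    refine ⟨fun j hj hne => ?_, fun j hj => ?_⟩
    · rw [hpt j hne]; exact h1 j hj hne
    · rw [hpt j (fun e => hj (by rw [e]; exact i1_mem_BigF hp1))]; exact h2 j hj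

lemma PhiL_down {p : Fin k → ℝ} {i1 : Fin k} (m t : ℕ) :
    ∀ (j : Fin k) (c : Fin k → ℕ), PhiL p i1 m t (addc j c) → PhiL p i1 m t c := by
  intro j c ⟨h1, h2⟩
  have haux : ∀ j', c j' ≤ addc j c j' := fun j' => Nat.le_add_right _ _
  exact ⟨fun j' hj' hne => le_trans (haux j') (h1 j' hj' hne),
    fun j' hj' => lt_of_le_of_lt (haux j') (h2 j' hj')⟩

/-- The counting/swap part of the hard case. -/
lemma swap_part {h : ℕ} {p : Fin k → ℝ} (hp0 : ∀ i, 0 ≤ p i) (hps : ∑ i, p i = 1)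
    (i1 : Fin k) (hfirst : ∀ j, p j ≤ p i1) (hi1bot : ∀ j : Fin k, ¬ j < i1)
    (hp1pos : 0 < p i1) (m : ℕ) :
    (p i1 / 2) * multiPr k h p {ω | CPred p i1 m (cnt ω)}
      ≤ multiPr k h p {ω | LPfull p i1 m i1 (cnt ω)} := by
  classical
  set Big := BigF p i1 with hBig
  have hi1B : i1 ∈ Big := i1_mem_BigF hp1pos
  -- cover
  have hcov : ∀ c : Fin k → ℕ, CPred p i1 m c → ∃ i ∈ Big, LPfull p i1 m i c := by
    intro c ⟨h1, h2⟩
    obtain ⟨i, hiB, hmax, hstrict⟩ := cover_exists Big c i1 hi1B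
    exact ⟨i, hiB, le_trans h1 (hmax i1 hi1B), hmax, hstrict, h2⟩
  have hunion := multiPr_union_cnt (h := h) hp0 Big (CPred p i1 m) (fun i c => LPfull p i1 m i c) hcov
  -- swap dominance
  have hswap : ∀ i ∈ Big, multiPr k h p {ω | LPfull p i1 m i (cnt ω)}
      ≤ multiPr k h p {ω | LPfull p i1 m i1 (cnt ω)} := by
    intro i hiBig
    by_cases hii : i = i1
    · rw [hii]
    · apply swap_compare hp0 i1 i (hfirst i) (LPfull p i1 m i) (LPfull p i1 m i1)
      · -- himp
        intro c hc
        obtain ⟨h1, h2, _h3, h4⟩ := hc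
        simp only [] at h1 h2 h4
        rw [Equiv.swap_apply_right] at h1
        refine ⟨h1, ?_, fun j _ hj => absurd hj (hi1bot j), ?_⟩
        · intro j hj
          by_cases hji1 : j = i1
          · rw [hji1]
          · by_cases hji : j = i
            · rw [hji]
              have := h2 i1 hi1B
              rw [Equiv.swap_apply_left, Equiv.swap_apply_right] at this
              exact this
            · have := h2 j hj
              rw [Equiv.swap_apply_of_ne_of_ne hji1 hji, Equiv.swap_apply_right] at this
              exact this
        · intro j hj
          have hji1 : j ≠ i1 := fun e => hj (by rw [e]; exact hi1B)
          have hji : j ≠ i := fun e => hj (by rw [e]; exact hiBig)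
          have := h4 j hj
          rw [Equiv.swap_apply_of_ne_of_ne hji1 hji] at this
          exact this
      · -- hge
        intro c hc
        exact hc.2.1 i1 hi1B
  have hcardB : multiPr k h p {ω | CPred p i1 m (cnt ω)}
      ≤ (Big.card : ℝ) * multiPr k h p {ω | LPfull p i1 m i1 (cnt ω)} := by
    calc multiPr k h p {ω | CPred p i1 m (cnt ω)}
        ≤ ∑ i ∈ Big, multiPr k h p {ω | LPfull p i1 m i (cnt ω)} := hunion
      _ ≤ Big.card • multiPr k h p {ω | LPfull p i1 m i1 (cnt ω)} :=
          Finset.sum_le_card_nsmul _ _ _ hswap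
      _ = (Big.card : ℝ) * multiPr k h p {ω | LPfull p i1 m i1 (cnt ω)} := nsmul_eq_mul _ _
  have hBcard : (Big.card : ℝ) * (p i1 / 2) ≤ 1 := by
    have h1 : Big.card • (p i1 / 2) ≤ ∑ j ∈ Big, p j :=
      Finset.card_nsmul_le_sum Big p (p i1 / 2) (fun j hj => (mem_BigF.1 hj).le)
    have h2 : ∑ j ∈ Big, p j ≤ 1 := by
      rw [← hps]
      exact Finset.sum_le_sum_of_subset_of_nonneg (Finset.subset_univ _) (fun i _ _ => hp0 i)
    rw [nsmul_eq_mul] at h1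
    linarith
  have hL0 : 0 ≤ multiPr k h p {ω | LPfull p i1 m i1 (cnt ω)} := multiPr_nonneg hp0 _
  nlinarith [multiPr_nonneg hp0 (A := {ω : Fin h → Fin k | CPred p i1 m (cnt ω)})]

set_option maxHeartbeats 1000000 in
/-- The ratio/shift part of the hard case. -/
lemma ratio_part {h : ℕ} {p : Fin k → ℝ} (hp0 : ∀ i, 0 ≤ p i) (hps : ∑ i, p i = 1)
    (i1 : Fin k) (hp1pos : 0 < p i1) (hp1lt : p i1 < 1)
    (m T : ℕ) (hm1 : 1 ≤ m) (hTh : T + 1 ≤ h) :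
    (((h:ℝ) - T) * p i1 / (((T:ℝ) + 1) * (1 - p i1)))
        * (multiPr k h p {ω | m ≤ cnt ω i1 ∧ PhiL p i1 m (cnt ω i1) (cnt ω)}
           - multiPr k h p {ω | T + 1 ≤ cnt ω i1 ∧ True})
      ≤ multiPr k h p {ω | m ≤ cnt ω i1 ∧ PhiL p i1 m (cnt ω i1 - 1) (cnt ω)} := by
  classical
  have h1p1 : (0:ℝ) < 1 - p i1 := by linarith
  set r0 : ℝ := ((h:ℝ) - T) * p i1 / (((T:ℝ) + 1) * (1 - p i1)) with hr0def
  have hQ0 : ∀ j, 0 ≤ qv p i1 j := qv_nonneg hp0 i1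
  have hQsum : ∑ j, qv p i1 j = 1 - p i1 := by rw [qv_sum, hps]
  have hThR : (T:ℝ) + 1 ≤ (h:ℝ) := by exact_mod_cast hTh
  have hD0 : (0:ℝ) < ((T:ℝ) + 1) * (1 - p i1) := by positivity
  have hr00 : 0 ≤ r0 := by
    apply div_nonneg ?_ hD0.le
    have : (0:ℝ) ≤ (h:ℝ) - T := by linarith
    positivity
  have hSdec := event_decomp (h := h) p i1 (fun t => m ≤ t)
    (fun t c => PhiL p i1 m (t-1) c) (fun t c => PhiL_inv hp1pos m (t-1) c)
  have hLdec := event_decomp (h := h) p i1 (fun t => m ≤ t)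
    (fun t c => PhiL p i1 m t c) (fun t c => PhiL_inv hp1pos m t c)
  have hTdec := event_decomp (h := h) p i1 (fun t => T + 1 ≤ t)
    (fun _ _ => True) (fun t c => Iff.rfl)
  set cS : ℕ → ℝ := fun t => (h.choose t : ℝ) * p i1 ^ t
    * mu (qv p i1) (h - t) (fun c => ind (PhiL p i1 m (t-1) c)) with hcSdef
  set cL : ℕ → ℝ := fun t => (h.choose t : ℝ) * p i1 ^ t
    * mu (qv p i1) (h - t) (fun c => ind (PhiL p i1 m t c)) with hcLdef
  set aa : ℕ → ℝ := fun t => (h.choose t : ℝ) * p i1 ^ t * (1 - p i1) ^ (h - t) with haadef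
  have hcS0 : ∀ t, 0 ≤ cS t := fun t => by
    rw [hcSdef]
    have := mu_nonneg hQ0 (h - t) (χ := fun c => ind (PhiL p i1 m (t-1) c))
      (fun c => ind_nonneg _)
    positivity
  have hcL0 : ∀ t, 0 ≤ cL t := fun t => by
    rw [hcLdef]
    have := mu_nonneg hQ0 (h - t) (χ := fun c => ind (PhiL p i1 m t c))
      (fun c => ind_nonneg _)
    positivity
  have hcLaa : ∀ t, cL t ≤ aa t := fun t => by
    rw [hcLdef, haadef]
    have hmu := mu_le_pow hQ0 (h - t) (PhiL p i1 m t)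
    rw [hQsum] at hmu
    have hc0 : (0:ℝ) ≤ (h.choose t : ℝ) * p i1 ^ t := by positivity
    calc (h.choose t : ℝ) * p i1 ^ t * mu (qv p i1) (h - t) (fun c => ind (PhiL p i1 m t c))
        ≤ (h.choose t : ℝ) * p i1 ^ t * (1 - p i1) ^ (h - t) := by
          apply mul_le_mul_of_nonneg_left hmu hc0
      _ = _ := rfl
  have haa0 : ∀ t, 0 ≤ aa t := fun t => by
    rw [haadef]; positivity
  -- Step B
  have hstep : ∀ t : ℕ, m ≤ t → t ≤ T + 1 → r0 * cL (t-1) ≤ cS t := by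
    intro t hmt htT
    have ht1 : 1 ≤ t := le_trans hm1 hmt
    have hth : t ≤ h := le_trans htT hTh
    have hidx : h - (t-1) = (h - t) + 1 := by omega
    have hdown : mu (qv p i1) (h - (t-1)) (fun c => ind (PhiL p i1 m (t-1) c))
        ≤ (1 - p i1) * mu (qv p i1) (h - t) (fun c => ind (PhiL p i1 m (t-1) c)) := by
      rw [hidx]
      have := mu_down hQ0 (h - t) (PhiL p i1 m (t-1)) (PhiL_down m (t-1))
      rwa [hQsum] at this
    have hcN := Nat.choose_succ_right_eq h (t-1)
    rw [show t - 1 + 1 = t by omega] at hcN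
    have e1 : ((t - 1 : ℕ) : ℝ) = (t:ℝ) - 1 := by
      rw [Nat.cast_sub ht1, Nat.cast_one]
    have e2 : ((h - (t - 1) : ℕ) : ℝ) = (h:ℝ) - ((t:ℝ) - 1) := by
      rw [Nat.cast_sub (by omega), e1]
    have hcR : (h.choose t : ℝ) * t = (h.choose (t-1) : ℝ) * ((h:ℝ) - ((t:ℝ) - 1)) := by
      have := congrArg (fun z : ℕ => (z:ℝ)) hcN
      push_cast at this
      rw [Nat.cast_sub (by omega : t - 1 ≤ h)] at this
      rw [e1] at this
      exact_mod_cast this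
    have hB0 : (0:ℝ) < (h.choose (t-1) : ℝ) := by
      exact_mod_cast Nat.choose_pos (show t - 1 ≤ h by omega)
    have hA0 : (0:ℝ) < (h.choose t : ℝ) := by exact_mod_cast Nat.choose_pos hth
    have htR : (1:ℝ) ≤ (t:ℝ) := by exact_mod_cast ht1
    have htTR : (t:ℝ) ≤ (T:ℝ) + 1 := by exact_mod_cast htT
    have hf1 : ((h:ℝ) - T) * t ≤ ((h:ℝ) - (t:ℝ) + 1) * ((T:ℝ) + 1) := by nlinarith
    have hmain : ((h:ℝ) - T) * (h.choose (t-1):ℝ) ≤ (h.choose t:ℝ) * ((T:ℝ) + 1) := by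
      have h2 : (t:ℝ) * (((h:ℝ) - T) * (h.choose (t-1):ℝ))
          ≤ (t:ℝ) * ((h.choose t:ℝ) * ((T:ℝ) + 1)) := by
        have e : (t:ℝ) * ((h.choose t:ℝ) * ((T:ℝ) + 1))
            = ((h.choose (t-1):ℝ) * ((h:ℝ) - ((t:ℝ) - 1))) * ((T:ℝ) + 1) := by
          rw [← hcR]; ring
        rw [e]
        have hmm := mul_le_mul_of_nonneg_left hf1 hB0.le
        nlinarith [hmm]
      exact le_of_mul_le_mul_left h2 (by linarith)
    have hkey : r0 * ((h.choose (t-1):ℝ) * (1 - p i1)) ≤ (h.choose t : ℝ) * p i1 := by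
      rw [hr0def, div_mul_eq_mul_div, div_le_iff₀ hD0]
      nlinarith [mul_le_mul_of_nonneg_left hmain (mul_nonneg hp1pos.le h1p1.le)]
    have hMS0 : 0 ≤ mu (qv p i1) (h - t) (fun c => ind (PhiL p i1 m (t-1) c)) :=
      mu_nonneg hQ0 _ (fun c => ind_nonneg _)
    have hpow : p i1 ^ t = p i1 ^ (t-1) * p i1 := by
      rw [← pow_succ]
      congr 1
      omega
    rw [hcLdef, hcSdef]
    calc r0 * ((h.choose (t-1) : ℝ) * p i1 ^ (t-1)
          * mu (qv p i1) (h - (t-1)) (fun c => ind (PhiL p i1 m (t-1) c)))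
        ≤ r0 * ((h.choose (t-1) : ℝ) * p i1 ^ (t-1)
          * ((1 - p i1) * mu (qv p i1) (h - t) (fun c => ind (PhiL p i1 m (t-1) c)))) := by
          apply mul_le_mul_of_nonneg_left ?_ hr00
          apply mul_le_mul_of_nonneg_left hdown (by positivity)
      _ = (r0 * ((h.choose (t-1):ℝ) * (1 - p i1)))
          * (p i1 ^ (t-1) * mu (qv p i1) (h - t) (fun c => ind (PhiL p i1 m (t-1) c))) := by
          ring
      _ ≤ ((h.choose t : ℝ) * p i1)
          * (p i1 ^ (t-1) * mu (qv p i1) (h - t) (fun c => ind (PhiL p i1 m (t-1) c))) := by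
          apply mul_le_mul_of_nonneg_right hkey (by positivity)
      _ = (h.choose t : ℝ) * p i1 ^ t
          * mu (qv p i1) (h - t) (fun c => ind (PhiL p i1 m (t-1) c)) := by
          rw [hpow]; ring
  -- rewrite T-tail with aa
  have hmuT : ∀ nn : ℕ, mu (qv p i1) nn (fun c => ind True) = (1 - p i1) ^ nn := by
    intro nn
    rw [mu_congr (χ' := fun _ => (1:ℝ)) (fun c _ => ind_pos trivial), mu_one, hQsum]
  have hTdec' : multiPr k h p {ω | T + 1 ≤ cnt ω i1 ∧ True}
      = ∑ t ∈ Finset.range (h+1), ind (T + 1 ≤ t) * aa t := by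
    rw [hTdec]
    refine Finset.sum_congr rfl fun t _ => ?_
    rw [hmuT (h - t), haadef]
  -- main chain
  rw [hSdec, hLdec, hTdec']
  have c1 : ∑ t ∈ Finset.range (h+1), ind (m ≤ t ∧ t ≤ T + 1) * cS t
      ≤ ∑ t ∈ Finset.range (h+1), ind (m ≤ t) * cS t := by
    apply Finset.sum_le_sum
    intro t _
    exact mul_le_mul_of_nonneg_right (ind_le_ind (fun hh => hh.1)) (hcS0 t)
  have c2 : ∑ t ∈ Finset.range (h+1), ind (m ≤ t ∧ t ≤ T + 1) * (r0 * cL (t-1))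
      ≤ ∑ t ∈ Finset.range (h+1), ind (m ≤ t ∧ t ≤ T + 1) * cS t := by
    apply Finset.sum_le_sum
    intro t _
    by_cases hg : m ≤ t ∧ t ≤ T + 1
    · rw [ind_pos hg, one_mul, one_mul]
      exact hstep t hg.1 hg.2
    · rw [ind_neg hg, zero_mul, zero_mul]
  have c4 : ∑ t ∈ Finset.range (h+1), ind (m ≤ t ∧ t ≤ T + 1) * cL (t-1)
      = ∑ s ∈ Finset.range h, ind (m ≤ s + 1 ∧ s + 1 ≤ T + 1) * cL s := by
    rw [Finset.sum_range_succ' (fun t => ind (m ≤ t ∧ t ≤ T + 1) * cL (t-1)) h]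
    have hz : ind (m ≤ 0 ∧ 0 ≤ T + 1) * cL (0-1) = 0 := by
      rw [ind_neg (fun hh => by omega), zero_mul]
    rw [hz, add_zero]
    refine Finset.sum_congr rfl fun s _ => ?_
    congr 1
  have c5 : ∑ s ∈ Finset.range (h+1), ind (m ≤ s) * cL s
      ≤ (∑ s ∈ Finset.range h, ind (m ≤ s + 1 ∧ s + 1 ≤ T + 1) * cL s)
        + ∑ s ∈ Finset.range (h+1), ind (T + 1 ≤ s) * aa s := by
    have hterm : ∀ s, ind (m ≤ s) * cL s
        ≤ ind (m ≤ s + 1 ∧ s + 1 ≤ T + 1) * cL s + ind (T + 1 ≤ s) * aa s := by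
      intro s
      by_cases hsT : s ≤ T
      · have h1 : ind (m ≤ s) ≤ ind (m ≤ s + 1 ∧ s + 1 ≤ T + 1) :=
          ind_le_ind (fun hh => ⟨by omega, by omega⟩)
        have h2 : 0 ≤ ind (T + 1 ≤ s) * aa s := mul_nonneg (ind_nonneg _) (haa0 s)
        nlinarith [mul_le_mul_of_nonneg_right h1 (hcL0 s)]
      · have h1 : ind (m ≤ s) * cL s ≤ aa s := by
          calc ind (m ≤ s) * cL s ≤ 1 * cL s :=
                mul_le_mul_of_nonneg_right (ind_le_one _) (hcL0 s)
            _ = cL s := one_mul _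
            _ ≤ aa s := hcLaa s
        have h2 : ind (T + 1 ≤ s) * aa s = aa s := by
          rw [ind_pos (by omega), one_mul]
        have h3 : 0 ≤ ind (m ≤ s + 1 ∧ s + 1 ≤ T + 1) * cL s :=
          mul_nonneg (ind_nonneg _) (hcL0 s)
        linarith
    have hlast : ind (m ≤ h + 1 ∧ h + 1 ≤ T + 1) * cL h = 0 := by
      rw [ind_neg (fun hh => by omega), zero_mul]
    calc ∑ s ∈ Finset.range (h+1), ind (m ≤ s) * cL s
        ≤ ∑ s ∈ Finset.range (h+1),
            (ind (m ≤ s + 1 ∧ s + 1 ≤ T + 1) * cL s + ind (T + 1 ≤ s) * aa s) :=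
          Finset.sum_le_sum fun s _ => hterm s
      _ = (∑ s ∈ Finset.range (h+1), ind (m ≤ s + 1 ∧ s + 1 ≤ T + 1) * cL s)
          + ∑ s ∈ Finset.range (h+1), ind (T + 1 ≤ s) * aa s := Finset.sum_add_distrib
      _ = (∑ s ∈ Finset.range h, ind (m ≤ s + 1 ∧ s + 1 ≤ T + 1) * cL s)
          + ∑ s ∈ Finset.range (h+1), ind (T + 1 ≤ s) * aa s := by
          rw [Finset.sum_range_succ, hlast, add_zero]
  -- put together
  have hfinal : r0 * ((∑ s ∈ Finset.range (h+1), ind (m ≤ s) * cL s)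
        - ∑ s ∈ Finset.range (h+1), ind (T + 1 ≤ s) * aa s)
      ≤ ∑ t ∈ Finset.range (h+1), ind (m ≤ t) * cS t := by
    have hmul : r0 * ((∑ s ∈ Finset.range (h+1), ind (m ≤ s) * cL s)
          - ∑ s ∈ Finset.range (h+1), ind (T + 1 ≤ s) * aa s)
        ≤ r0 * ∑ s ∈ Finset.range h, ind (m ≤ s + 1 ∧ s + 1 ≤ T + 1) * cL s := by
      apply mul_le_mul_of_nonneg_left ?_ hr00
      linarith [c5]
    have hmul2 : r0 * ∑ s ∈ Finset.range h, ind (m ≤ s + 1 ∧ s + 1 ≤ T + 1) * cL s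
        = ∑ t ∈ Finset.range (h+1), ind (m ≤ t ∧ t ≤ T + 1) * (r0 * cL (t-1)) := by
      rw [show (∑ t ∈ Finset.range (h+1), ind (m ≤ t ∧ t ≤ T + 1) * (r0 * cL (t-1)))
          = r0 * ∑ t ∈ Finset.range (h+1), ind (m ≤ t ∧ t ≤ T + 1) * cL (t-1) by
            rw [Finset.mul_sum]; exact Finset.sum_congr rfl fun t _ => by ring]
      rw [c4]
    linarith [c1, c2, hmul2 ▸ hmul]
  exact hfinal

set_option maxHeartbeats 1000000 in
lemma hard_case {n k h : ℕ} {p : Fin k → ℝ} (hp0 : ∀ i, 0 ≤ p i) (hps : ∑ i, p i = 1)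
    (i1 : Fin k) (hfirst : ∀ j, p j ≤ p i1) (hi1bot : ∀ j : Fin k, ¬ j < i1)
    (hp1pos : 0 < p i1) (hp1lt : p i1 < 2/3)
    (hkn : k ≤ n) (hn6 : 1000000 ≤ n)
    (hX : 324 * Real.log n < (h:ℝ) * p i1) :
    p i1 / 18 ≤ multiPr k h p (Wstrict k h i1) := by
  classical
  have hn1 : 1 ≤ n := by omega
  have hlogn : (13:ℝ) ≤ Real.log n := log_1e6 hn6
  have hlog0 : (0:ℝ) ≤ Real.log n := by linarith
  set X := (h:ℝ) * p i1 with hXdef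
  have hXle : 324 * Real.log n ≤ X := hX.le
  have hX0 : (0:ℝ) < X := lt_of_le_of_lt (by positivity) hX
  have hX4212 : (4212:ℝ) ≤ X := by nlinarith
  have hp1le1 : p i1 ≤ 1 := pj_le_one hp0 hps i1
  have hhcast : (0:ℝ) ≤ (h:ℝ) := Nat.cast_nonneg h
  have hhX : X ≤ (h:ℝ) := by rw [hXdef]; nlinarith
  set m := Nat.ceil (3/4 * X) with hmdef
  set T := Nat.ceil (5/4 * X) with hTdef
  have hm1 : 1 ≤ m := by
    have := Nat.ceil_pos.2 (show (0:ℝ) < 3/4 * X by linarith)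
    omega
  have hmge : 3/4 * X ≤ (m:ℝ) := Nat.le_ceil _
  have hmle : (m:ℝ) ≤ 3/4 * X + 1 := (Nat.ceil_lt_add_one (by positivity)).le
  have hTge : 5/4 * X ≤ (T:ℝ) := Nat.le_ceil _
  have hTle : (T:ℝ) ≤ 5/4 * X + 1 := (Nat.ceil_lt_add_one (by positivity)).le
  have hTh : T + 1 ≤ h := by
    have hreal : ((T:ℕ):ℝ) + 1 < (h:ℝ) := by nlinarith
    have : (((T+1):ℕ):ℝ) < (h:ℝ) := by push_cast; linarith
    exact le_of_lt (by exact_mod_cast this)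
  have hmm1 : ((m - 1 : ℕ):ℝ) ≤ 3/4 * X := by
    have e : ((m-1:ℕ):ℝ) = (m:ℝ) - 1 := by rw [Nat.cast_sub hm1, Nat.cast_one]
    rw [e]; linarith
  have ht1 := tail_low hp0 hps i1 (m-1) hmm1 hn1 hXle hlog0
  have hsmall : ∀ j, j ∉ BigF p i1 → p j ≤ p i1 / 2 := by
    intro j hj
    by_contra hc
    push_neg at hc
    exact hj (mem_BigF.2 hc)
  have ht3' := tail_up hp0 hps i1 (T+1) (by push_cast; linarith) hn1 hXle hlog0
  have hcov : ∀ c : Fin k → ℕ, CPred p i1 m c ∨ (c i1 ≤ m - 1)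
      ∨ ∃ j ∈ Finset.univ \ BigF p i1, m ≤ c j := by
    intro c
    by_cases h1 : m ≤ c i1
    · by_cases h2 : ∀ j, j ∉ BigF p i1 → c j < m
      · exact Or.inl ⟨h1, h2⟩
      · push_neg at h2
        obtain ⟨j, hj, hjm⟩ := h2
        exact Or.inr (Or.inr ⟨j, Finset.mem_sdiff.2 ⟨Finset.mem_univ j, hj⟩, hjm⟩)
    · exact Or.inr (Or.inl (by omega))
  have htot := multiPr_total (h := h) hp0 hps (CPred p i1 m) (fun c => c i1 ≤ m - 1)
      (Finset.univ \ BigF p i1) (fun j c => m ≤ c j) hcov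
  have hn0 : (0:ℝ) < n := by exact_mod_cast (show 0 < n by omega)
  have hnR : (1000000:ℝ) ≤ (n:ℝ) := by exact_mod_cast hn6
  have hinvn : (n:ℝ)⁻¹ ≤ 1/1000000 := by
    have := one_div_le_one_div_of_le (by norm_num : (0:ℝ) < 1000000) hnR
    simpa [one_div] using this
  have hinv0 : (0:ℝ) ≤ (n:ℝ)⁻¹ := by positivity
  have h8 : ((n:ℝ)⁻¹)^8 ≤ 1/100 := by
    calc ((n:ℝ)⁻¹)^8 ≤ (1/1000000:ℝ)^8 := pow_le_pow_left₀ hinv0 hinvn 8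
      _ ≤ 1/100 := by norm_num
  have hsum16 : ∑ j ∈ Finset.univ \ BigF p i1, multiPr k h p {ω | m ≤ cnt ω j} ≤ 1/100 := by
    have hb : ∀ j ∈ Finset.univ \ BigF p i1,
        multiPr k h p {ω | m ≤ cnt ω j} ≤ ((n:ℝ)⁻¹)^16 := by
      intro j hj
      exact tail_high hp0 hps i1 j m (hsmall j (Finset.mem_sdiff.1 hj).2) hmge hn1 hXle hlog0
    calc ∑ j ∈ Finset.univ \ BigF p i1, multiPr k h p {ω | m ≤ cnt ω j}
        ≤ (Finset.univ \ BigF p i1).card • (((n:ℝ)⁻¹)^16) :=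
          Finset.sum_le_card_nsmul _ _ _ hb
      _ = ((Finset.univ \ BigF p i1).card : ℝ) * ((n:ℝ)⁻¹)^16 := nsmul_eq_mul _ _
      _ ≤ (n:ℝ) * ((n:ℝ)⁻¹)^16 := by
          apply mul_le_mul_of_nonneg_right ?_ (by positivity)
          have hcard : (Finset.univ \ BigF p i1).card ≤ k := by
            calc (Finset.univ \ BigF p i1).card ≤ (Finset.univ : Finset (Fin k)).card :=
                Finset.card_le_card (Finset.sdiff_subset)
              _ = k := by simp
          exact_mod_cast le_trans hcard hkn
      _ = ((n:ℝ)⁻¹)^15 := by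
          rw [show (16:ℕ) = 15 + 1 from rfl, pow_succ, mul_comm ((n:ℝ)⁻¹ ^ 15) _,
            ← mul_assoc, mul_inv_cancel₀ hn0.ne', one_mul]
      _ ≤ 1/100 := by
          calc ((n:ℝ)⁻¹)^15 ≤ (1/1000000:ℝ)^15 := pow_le_pow_left₀ hinv0 hinvn 15
            _ ≤ 1/100 := by norm_num
  have hPrC : 96/100 ≤ multiPr k h p {ω | CPred p i1 m (cnt ω)} := by
    linarith [htot, hsum16, h8, ht1]
  have hswap := swap_part (h := h) hp0 hps i1 hfirst hi1bot hp1pos m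
  have hratio := ratio_part (h := h) hp0 hps i1 hp1pos (by linarith) m T hm1 hTh
  have hLiff : ∀ c : Fin k → ℕ, LPfull p i1 m i1 c ↔ (m ≤ c i1 ∧ PhiL p i1 m (c i1) c) := by
    intro c
    constructor
    · rintro ⟨h1, h2, _, h4⟩
      exact ⟨h1, fun j hj _ => h2 j hj, h4⟩
    · rintro ⟨h1, h2, h3⟩
      refine ⟨h1, ?_, fun j _ hj => absurd hj (hi1bot j), h3⟩
      intro j hj
      by_cases hji : j = i1
      · rw [hji]
      · exact h2 j hj hji
  have hLeq : multiPr k h p {ω | LPfull p i1 m i1 (cnt ω)}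
      = multiPr k h p {ω | m ≤ cnt ω i1 ∧ PhiL p i1 m (cnt ω i1) (cnt ω)} := by
    congr 1
    ext ω
    exact hLiff (cnt ω)
  have hSsub : {ω : Fin h → Fin k | m ≤ cnt ω i1 ∧ PhiL p i1 m (cnt ω i1 - 1) (cnt ω)}
      ⊆ Wstrict k h i1 := by
    intro ω hω
    obtain ⟨h1, h2, h3⟩ := hω
    intro j hj
    by_cases hb : j ∈ BigF p i1
    · have := h2 j hb hj
      omega
    · exact lt_of_lt_of_le (h3 j hb) h1
  have hTT : multiPr k h p {ω | T + 1 ≤ cnt ω i1 ∧ True} ≤ ((n:ℝ)⁻¹)^4 := by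
    have heq : {ω : Fin h → Fin k | T + 1 ≤ cnt ω i1 ∧ True}
        = {ω : Fin h → Fin k | T + 1 ≤ cnt ω i1} := by
      ext ω; simp
    rw [heq]
    exact ht3'
  have hp1n : (n:ℝ)⁻¹ ≤ p i1 := by
    have h1 : (1:ℝ) ≤ (n:ℝ) * p i1 := by
      have h3 : ∑ i, p i ≤ ∑ _i : Fin k, p i1 := Finset.sum_le_sum fun i _ => hfirst i
      have h4 : (∑ _i : Fin k, p i1) = (k:ℝ) * p i1 := by
        rw [Finset.sum_const, Finset.card_univ, Fintype.card_fin, nsmul_eq_mul]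
      have h5 : (k:ℝ) * p i1 ≤ (n:ℝ) * p i1 :=
        mul_le_mul_of_nonneg_right (by exact_mod_cast hkn) hp1pos.le
      rw [← hps]
      linarith
    calc (n:ℝ)⁻¹ = 1 / n := (one_div _).symm
      _ ≤ p i1 := by rw [div_le_iff₀ hn0]; linarith
  have ht4 : ((n:ℝ)⁻¹)^4 ≤ (1/100) * p i1 := by
    calc ((n:ℝ)⁻¹)^4 = ((n:ℝ)⁻¹)^3 * (n:ℝ)⁻¹ := by rw [← pow_succ]
      _ ≤ (1/1000000:ℝ)^3 * p i1 :=
          mul_le_mul (pow_le_pow_left₀ hinv0 hinvn 3) hp1n hinv0 (by norm_num)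
      _ ≤ (1/100) * p i1 := by nlinarith [hp1pos.le]
  have hD0 : (0:ℝ) < ((T:ℝ) + 1) * (1 - p i1) := by
    have : (0:ℝ) < 1 - p i1 := by linarith
    positivity
  have hr013 : (1:ℝ)/3 ≤ ((h:ℝ) - T) * p i1 / (((T:ℝ) + 1) * (1 - p i1)) := by
    rw [le_div_iff₀ hD0]
    have hXp1 : X * p i1 ≤ X * (2/3) := by nlinarith
    have hTp1 : (T:ℝ) * p i1 ≤ (5/4 * X + 1) * p i1 :=
      mul_le_mul_of_nonneg_right hTle hp1pos.le
    nlinarith [hX4212, hp1pos, hp1lt, hhX, hTge, hTle]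
  have hr00 : (0:ℝ) ≤ ((h:ℝ) - T) * p i1 / (((T:ℝ) + 1) * (1 - p i1)) := by
    linarith [hr013]
  have hLC : (p i1 / 2) * multiPr k h p {ω | CPred p i1 m (cnt ω)}
      ≤ multiPr k h p {ω | m ≤ cnt ω i1 ∧ PhiL p i1 m (cnt ω i1) (cnt ω)} := by
    rw [← hLeq]
    exact hswap
  have hPrL : (48/100) * p i1
      ≤ multiPr k h p {ω | m ≤ cnt ω i1 ∧ PhiL p i1 m (cnt ω i1) (cnt ω)} := by
    nlinarith [hLC, hPrC, hp1pos]
  have hdiff : (47/100) * p i1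
      ≤ multiPr k h p {ω | m ≤ cnt ω i1 ∧ PhiL p i1 m (cnt ω i1) (cnt ω)}
        - multiPr k h p {ω | T + 1 ≤ cnt ω i1 ∧ True} := by
    linarith [hTT, ht4, hPrL]
  have hfin : (1/3) * ((47/100) * p i1)
      ≤ multiPr k h p {ω | m ≤ cnt ω i1 ∧ PhiL p i1 m (cnt ω i1 - 1) (cnt ω)} := by
    calc (1/3) * ((47/100) * p i1)
        ≤ (((h:ℝ) - T) * p i1 / (((T:ℝ) + 1) * (1 - p i1)))
          * (multiPr k h p {ω | m ≤ cnt ω i1 ∧ PhiL p i1 m (cnt ω i1) (cnt ω)}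
             - multiPr k h p {ω | T + 1 ≤ cnt ω i1 ∧ True}) := by
          apply mul_le_mul hr013 hdiff (by positivity) hr00
      _ ≤ _ := hratio
  calc p i1 / 18 ≤ (1/3) * ((47/100) * p i1) := by nlinarith [hp1pos.le]
    _ ≤ multiPr k h p {ω | m ≤ cnt ω i1 ∧ PhiL p i1 m (cnt ω i1 - 1) (cnt ω)} := hfin
    _ ≤ multiPr k h p (Wstrict k h i1) := multiPr_mono hp0 hSsub

end SW

set_option maxHeartbeats 1000000 in
/-- if `p_1 ≥ p_2 ≥ … ≥ p_k`, `k ≤ n` and `h·p_1 > 324·log n`, then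
`Pr(W_{1,2,strict}) ≥ (1/36)·(p_1 + p_2)` (for `n` large enough). -/
theorem strict_win_12_prob_lower_bound :
    ∃ n0 : ℕ, ∀ (n k h : ℕ), n0 ≤ n → ∀ (hk : 2 ≤ k), 1 ≤ h → k ≤ n →
      ∀ p : Fin k → ℝ, (∀ i, 0 ≤ p i) → ∑ i, p i = 1 →
        (∀ i j : Fin k, i ≤ j → p j ≤ p i) →
        324 * Real.log n < (h : ℝ) * p (o₁ k hk) →
        (1 / 36) * (p (o₁ k hk) + p (o₂ k hk)) ≤
          multiPr k h p (W12strict k h (o₁ k hk) (o₂ k hk)) := by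
  classical
  use 1000000
  intro n k h hn hk hh hkn p hp0 hps hmono hlog
  set i1 := o₁ k hk with hi1def
  set i2 := o₂ k hk with hi2def
  have hi1le : ∀ j : Fin k, i1 ≤ j := by
    intro j
    rw [hi1def]
    show (⟨0, by omega⟩ : Fin k) ≤ j
    exact Fin.mk_le_of_le_val (Nat.zero_le _)
  have hi1bot : ∀ j : Fin k, ¬ j < i1 := by
    intro j hlt
    rw [hi1def] at hlt
    have : j.val < 0 := hlt
    omega
  have hfirst : ∀ j, p j ≤ p i1 := fun j => hmono i1 j (hi1le j)
  have hp1pos : 0 < p i1 := by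
    by_contra hcon
    push_neg at hcon
    have h1 : ∑ i, p i ≤ 0 := Finset.sum_nonpos fun j _ => le_trans (hfirst j) hcon
    rw [hps] at h1
    linarith
  have hp1le1 : p i1 ≤ 1 := SW.pj_le_one hp0 hps i1
  have hp2le1 : p i2 ≤ 1 := SW.pj_le_one hp0 hps i2
  have hp20 : 0 ≤ p i2 := hp0 i2
  by_cases hcase : p i2 ≤ p i1 / 2
  · -- easy case : all other opinions are small
    have hn1 : 1 ≤ n := by omega
    have hlogn := SW.log_1e6 hn
    have hlog0 : (0:ℝ) ≤ Real.log n := by linarith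
    set X := (h:ℝ) * p i1 with hXdef
    have hXle : 324 * Real.log n ≤ X := hlog.le
    have hX0 : (0:ℝ) < X := lt_of_le_of_lt (by positivity) hlog
    set m := Nat.ceil (3/4 * X) with hmdef
    have hm1 : 1 ≤ m := by
      have := Nat.ceil_pos.2 (show (0:ℝ) < 3/4 * X by linarith)
      omega
    have hmge : 3/4 * X ≤ (m:ℝ) := Nat.le_ceil _
    have hmm1 : ((m - 1 : ℕ):ℝ) ≤ 3/4 * X := by
      have e : ((m-1:ℕ):ℝ) = (m:ℝ) - 1 := by rw [Nat.cast_sub hm1, Nat.cast_one]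
      have hmle : (m:ℝ) ≤ 3/4 * X + 1 := (Nat.ceil_lt_add_one (by positivity)).le
      rw [e]
      linarith
    have ht1 := SW.tail_low hp0 hps i1 (m-1) hmm1 hn1 hXle hlog0
    have hsmallall : ∀ j : Fin k, j ≠ i1 → p j ≤ p i1 / 2 := by
      intro j hj
      have hv : j.val ≠ 0 := by
        intro h0
        apply hj
        rw [hi1def]
        exact Fin.ext h0
      have hij : i2 ≤ j := by
        rw [hi2def]
        show (⟨1, by omega⟩ : Fin k) ≤ j
        exact Fin.mk_le_of_le_val (by omega)
      exact le_trans (hmono i2 j hij) hcase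
    have hcov : ∀ c : Fin k → ℕ, (m ≤ c i1 ∧ ∀ j, j ≠ i1 → c j < m) ∨ (c i1 ≤ m - 1)
        ∨ ∃ j ∈ Finset.univ.erase i1, m ≤ c j := by
      intro c
      by_cases h1 : m ≤ c i1
      · by_cases h2 : ∀ j, j ≠ i1 → c j < m
        · exact Or.inl ⟨h1, h2⟩
        · push_neg at h2
          obtain ⟨j, hj, hjm⟩ := h2
          exact Or.inr (Or.inr ⟨j, Finset.mem_erase.2 ⟨hj, Finset.mem_univ j⟩, hjm⟩)
      · exact Or.inr (Or.inl (by omega))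
    have htot := SW.multiPr_total (h := h) hp0 hps
      (fun c => m ≤ c i1 ∧ ∀ j, j ≠ i1 → c j < m) (fun c => c i1 ≤ m - 1)
      (Finset.univ.erase i1) (fun j c => m ≤ c j) hcov
    have hn0 : (0:ℝ) < n := by exact_mod_cast (show 0 < n by omega)
    have hnR : (1000000:ℝ) ≤ (n:ℝ) := by exact_mod_cast hn
    have hinvn : (n:ℝ)⁻¹ ≤ 1/1000000 := by
      have := one_div_le_one_div_of_le (by norm_num : (0:ℝ) < 1000000) hnR
      simpa [one_div] using this
    have hinv0 : (0:ℝ) ≤ (n:ℝ)⁻¹ := by positivity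
    have h8 : ((n:ℝ)⁻¹)^8 ≤ 1/100 := by
      calc ((n:ℝ)⁻¹)^8 ≤ (1/1000000:ℝ)^8 := pow_le_pow_left₀ hinv0 hinvn 8
        _ ≤ 1/100 := by norm_num
    have hsum16 : ∑ j ∈ Finset.univ.erase i1, multiPr k h p {ω | m ≤ cnt ω j} ≤ 1/100 := by
      have hb : ∀ j ∈ Finset.univ.erase i1,
          multiPr k h p {ω | m ≤ cnt ω j} ≤ ((n:ℝ)⁻¹)^16 := by
        intro j hj
        exact SW.tail_high hp0 hps i1 j m (hsmallall j (Finset.ne_of_mem_erase hj))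
          hmge hn1 hXle hlog0
      calc ∑ j ∈ Finset.univ.erase i1, multiPr k h p {ω | m ≤ cnt ω j}
          ≤ (Finset.univ.erase i1).card • (((n:ℝ)⁻¹)^16) :=
            Finset.sum_le_card_nsmul _ _ _ hb
        _ = ((Finset.univ.erase i1).card : ℝ) * ((n:ℝ)⁻¹)^16 := nsmul_eq_mul _ _
        _ ≤ (n:ℝ) * ((n:ℝ)⁻¹)^16 := by
            apply mul_le_mul_of_nonneg_right ?_ (by positivity)
            have hcard : (Finset.univ.erase i1).card ≤ k := by
              calc (Finset.univ.erase i1).card ≤ (Finset.univ : Finset (Fin k)).card :=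
                  Finset.card_le_card (Finset.erase_subset _ _)
                _ = k := by simp
            exact_mod_cast le_trans hcard hkn
        _ = ((n:ℝ)⁻¹)^15 := by
            rw [show (16:ℕ) = 15 + 1 from rfl, pow_succ, mul_comm ((n:ℝ)⁻¹ ^ 15) _,
              ← mul_assoc, mul_inv_cancel₀ hn0.ne', one_mul]
        _ ≤ 1/100 := by
            calc ((n:ℝ)⁻¹)^15 ≤ (1/1000000:ℝ)^15 := pow_le_pow_left₀ hinv0 hinvn 15
              _ ≤ 1/100 := by norm_num
    have hPrC : 96/100 ≤ multiPr k h p {ω | m ≤ cnt ω i1 ∧ ∀ j, j ≠ i1 → cnt ω j < m} := by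
      linarith [htot, hsum16, h8, ht1]
    have hsub : {ω : Fin h → Fin k | m ≤ cnt ω i1 ∧ ∀ j, j ≠ i1 → cnt ω j < m}
        ⊆ W12strict k h i1 i2 := by
      intro ω hω
      obtain ⟨h1, h2⟩ := hω
      left
      intro j hj
      exact lt_of_lt_of_le (h2 j hj) h1
    have hmono' := SW.multiPr_mono hp0 hsub
    calc (1/36) * (p i1 + p i2) ≤ (1/36) * 2 := by linarith
      _ ≤ 96/100 := by norm_num
      _ ≤ multiPr k h p {ω | m ≤ cnt ω i1 ∧ ∀ j, j ≠ i1 → cnt ω j < m} := hPrC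
      _ ≤ multiPr k h p (W12strict k h i1 i2) := hmono'
  · -- hard case
    push_neg at hcase
    have hi1ne2 : i1 ≠ i2 := by
      rw [hi1def, hi2def]
      simp [o₁, o₂, Fin.ext_iff]
    have hsumpair : p i1 + p i2 ≤ 1 := by
      have h1 : ({i1, i2} : Finset (Fin k)).sum p ≤ ∑ i, p i :=
        Finset.sum_le_sum_of_subset_of_nonneg (Finset.subset_univ _) (fun i _ _ => hp0 i)
      rw [Finset.sum_pair hi1ne2, hps] at h1
      exact h1
    have hp1lt : p i1 < 2/3 := by linarith
    have hhard := SW.hard_case hp0 hps i1 hfirst hi1bot hp1pos hp1lt hkn hn hlog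
    have hsub : Wstrict k h i1 ⊆ W12strict k h i1 i2 := Set.subset_union_left
    have hmono' := SW.multiPr_mono hp0 hsub
    have hp21 : p i2 ≤ p i1 := hfirst i2
    calc (1/36) * (p i1 + p i2) ≤ (1/36) * (2 * p i1) := by linarith
      _ = p i1 / 18 := by ring
      _ ≤ multiPr k h p (Wstrict k h i1) := hhard
      _ ≤ multiPr k h p (W12strict k h i1 i2) := hmono'
end
end
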